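/- arXiv:2404.04534 — 6 statements merged into one kernel-verified Lean document; each statement's English description precedes it below -/
import Mathlib

section
/- Suppose λ > 0 and let π be any optimal policy (maximizer of J). Then within each group, the selection probability is non-decreasing in qualification: for any group c and qualifications y > y' with p(y,c) > 0 and p(y',c) > 0, one has π(c,y) ≥ π(c,y'). -/
/-!
Static setting: `Y` is a finite set of nonzero real qualifications; the two groups
`A`/`B` are encoded as `true`/`false`; `p c y` is the joint pmf on group × qualification.
-/

open Finset Filter Topology
open scoped Classical

noncomputable section

/-- Marginal probability of group `c`. -/
def pG (Y : Finset ℝ) (p : Bool → ℝ → ℝ) (c : Bool) : ℝ := ∑ y ∈ Y, p c y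

/-- Conditional pmf `p(y|c)`. -/
def pCond (Y : Finset ℝ) (p : Bool → ℝ → ℝ) (c : Bool) (y : ℝ) : ℝ := p c y / pG Y p c

/-- `p` is a pmf on `{A,B} × Y`, with positive group marginals, and all
qualifications in `Y` are nonzero. -/
def IsPMF (Y : Finset ℝ) (p : Bool → ℝ → ℝ) : Prop :=
  (∀ y ∈ Y, y ≠ 0) ∧ (∀ c, ∀ y ∈ Y, 0 ≤ p c y) ∧
    (∑ c : Bool, ∑ y ∈ Y, p c y) = 1 ∧ (∀ c, 0 < pG Y p c)

/-- A policy assigns selection probabilities in `[0,1]`. -/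
def Admissible (Y : Finset ℝ) (π : Bool → ℝ → ℝ) : Prop :=
  ∀ c, ∀ y ∈ Y, 0 ≤ π c y ∧ π c y ≤ 1

/-- Institution utility `U(π) = ∑ p(c,y)·y·π(c,y)`. -/
def util (Y : Finset ℝ) (p π : Bool → ℝ → ℝ) : ℝ :=
  ∑ c : Bool, ∑ y ∈ Y, p c y * y * π c y

/-- Selection rate of group `c`. -/
def selRate (Y : Finset ℝ) (p π : Bool → ℝ → ℝ) (c : Bool) : ℝ :=
  ∑ y ∈ Y, pCond Y p c y * π c y

/-- Disparity `Δ(π)`. -/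
def disp (Y : Finset ℝ) (p π : Bool → ℝ → ℝ) : ℝ :=
  |selRate Y p π true - selRate Y p π false|

/-- Penalized objective `J(π) = U(π) − λ·g(Δ(π))`. -/
def obj (Y : Finset ℝ) (p : Bool → ℝ → ℝ) (g : ℝ → ℝ) (lam : ℝ) (π : Bool → ℝ → ℝ) : ℝ :=
  util Y p π - lam * g (disp Y p π)

/-- Optimal policy: admissible maximizer of `J`. -/
def IsOptimal (Y : Finset ℝ) (p : Bool → ℝ → ℝ) (g : ℝ → ℝ) (lam : ℝ)
    (π : Bool → ℝ → ℝ) : Prop :=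
  Admissible Y π ∧ ∀ π', Admissible Y π' → obj Y p g lam π' ≤ obj Y p g lam π

/-- `g` is nondecreasing, nonnegative, convex on `[0,∞)` with `g 0 = 0`. -/
def AdmissiblePenalty (g : ℝ → ℝ) : Prop :=
  g 0 = 0 ∧ MonotoneOn g (Set.Ici 0) ∧ ConvexOn ℝ (Set.Ici 0) g ∧
    ∀ x ∈ Set.Ici (0 : ℝ), 0 ≤ g x

/-- `Pr(Y > 0 | c)`. -/
def posRate (Y : Finset ℝ) (p : Bool → ℝ → ℝ) (c : Bool) : ℝ :=
  ∑ y ∈ Y.filter (fun y => 0 < y), pCond Y p c y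

/-- `Δ_UM = Pr(Y>0|A) − Pr(Y>0|B)`. -/
def dUM (Y : Finset ℝ) (p : Bool → ℝ → ℝ) : ℝ := posRate Y p true - posRate Y p false

/-- `E[Y₊] = ∑_{c, y>0} p(c,y)·y`, the unconstrained maximal utility. -/
def eyPos (Y : Finset ℝ) (p : Bool → ℝ → ℝ) : ℝ :=
  ∑ c : Bool, ∑ y ∈ Y.filter (fun y => 0 < y), p c y * y

/-- The index set `𝒯_e`. -/
def TE (Y : Finset ℝ) (p : Bool → ℝ → ℝ) : Finset (ℝ × Bool) :=
  (Y ×ˢ (Finset.univ : Finset Bool)).filter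
    (fun yc => (yc.2 = true ∧ 0 < yc.1 ∧ 0 < pCond Y p true yc.1) ∨
               (yc.2 = false ∧ yc.1 < 0 ∧ 0 < pCond Y p false yc.1))

lemma sum_diff_two {Y : Finset ℝ} {y y' : ℝ} (hy : y ∈ Y) (hy' : y' ∈ Y) (hne : y ≠ y')
    (f f' : ℝ → ℝ) (h : ∀ z ∈ Y, z ≠ y → z ≠ y' → f' z = f z) :
    ∑ z ∈ Y, f' z = (∑ z ∈ Y, f z) + (f' y - f y) + (f' y' - f y') := by
  have key : ∑ z ∈ Y, (f' z - f z) = (f' y - f y) + (f' y' - f y') := by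
    rw [show f' y - f y + (f' y' - f y') = ∑ z ∈ ({y, y'} : Finset ℝ), (f' z - f z) from
      (Finset.sum_pair hne (f := fun z => f' z - f z)).symm]
    refine (Finset.sum_subset ?_ ?_).symm
    · intro z hz
      rcases Finset.mem_insert.mp hz with h1 | h1
      · simpa [h1] using hy
      · simpa [Finset.mem_singleton.mp h1] using hy'
    · intro z hz hz2
      simp only [Finset.mem_insert, Finset.mem_singleton] at hz2
      push_neg at hz2
      rw [h z hz hz2.1 hz2.2]; ring
  have := Finset.sum_sub_distrib (s := Y) (f := f') (g := f)
  linarith [this ▸ key]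

/-- For `λ > 0`, any optimal policy has selection probability
non-decreasing in qualification within each group (on the support of `p`). -/
theorem stmt_0 (Y : Finset ℝ) (p : Bool → ℝ → ℝ) (hp : IsPMF Y p)
    (g : ℝ → ℝ) (hg : AdmissiblePenalty g) (lam : ℝ) (hlam : 0 < lam)
    (π : Bool → ℝ → ℝ) (hopt : IsOptimal Y p g lam π) :
    ∀ c : Bool, ∀ y ∈ Y, ∀ y' ∈ Y, y' < y → 0 < p c y → 0 < p c y' →
      π c y' ≤ π c y := by
  intro c y hy y' hy' hlt hpy hpy'
  by_contra hcon
  push_neg at hcon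
  -- hcon : π c y < π c y'
  obtain ⟨hadm, hmax⟩ := hopt
  have hbnd := hadm c y hy
  have hbnd' := hadm c y' hy'
  have hP : 0 < pG Y p c := hp.2.2.2 c
  have hne : y ≠ y' := ne_of_gt hlt
  -- perturbation size
  set t : ℝ := min ((1 - π c y) / p c y') (π c y' / p c y) with ht
  have h1 : 0 < 1 - π c y := by linarith [hbnd'.2]
  have h2 : 0 < π c y' := lt_of_le_of_lt hbnd.1 hcon
  have htpos : 0 < t := lt_min (div_pos h1 hpy') (div_pos h2 hpy)
  have hδ1 : t * p c y' ≤ 1 - π c y := by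
    have := mul_le_mul_of_nonneg_right (min_le_left ((1 - π c y) / p c y') (π c y' / p c y))
      (le_of_lt hpy')
    rwa [div_mul_cancel₀ _ (ne_of_gt hpy')] at this
  have hδ2 : t * p c y ≤ π c y' := by
    have := mul_le_mul_of_nonneg_right (min_le_right ((1 - π c y) / p c y') (π c y' / p c y))
      (le_of_lt hpy)
    rwa [div_mul_cancel₀ _ (ne_of_gt hpy)] at this
  -- the perturbed policy
  set q : ℝ → ℝ := fun z => if z = y then π c y + t * p c y' else
      if z = y' then π c y' - t * p c y else π c z with hq
  set π' : Bool → ℝ → ℝ := fun c' z => if c' = c then q z else π c' z with hπ'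
  have hπ'c : ∀ z, π' c z = q z := fun z => by simp [hπ']
  have hπ'o : ∀ c', c' ≠ c → ∀ z, π' c' z = π c' z := fun c' hc' z => by simp [hπ', hc']
  have hqy : q y = π c y + t * p c y' := by simp [hq]
  have hqy' : q y' = π c y' - t * p c y := by simp [hq, hne.symm]
  have hqo : ∀ z, z ≠ y → z ≠ y' → q z = π c z := fun z h1 h2 => by simp [hq, h1, h2]
  -- admissibility of π'
  have hadm' : Admissible Y π' := by
    intro c' z hz
    by_cases hc' : c' = c
    · subst hc'
      rw [hπ'c]
      by_cases hzy : z = y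
      · subst hzy
        rw [hqy]
        constructor
        · nlinarith [hbnd.1, mul_pos htpos hpy']
        · linarith
      · by_cases hzy' : z = y'
        · subst hzy'
          rw [hqy']
          constructor
          · linarith
          · nlinarith [hbnd'.2]
        · rw [hqo z hzy hzy']; exact hadm c' z hz
    · rw [hπ'o c' hc']; exact hadm c' z hz
  -- selection rates are unchanged
  have hsel : ∀ c', selRate Y p π' c' = selRate Y p π c' := by
    intro c'
    by_cases hc' : c' = c
    · subst hc'
      unfold selRate
      have := sum_diff_two hy hy' hne (fun z => pCond Y p c' z * π c' z)
        (fun z => pCond Y p c' z * π' c' z)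
        (fun z _ h1 h2 => by rw [hπ'c, hqo z h1 h2])
      rw [this, hπ'c, hπ'c, hqy, hqy']
      unfold pCond
      field_simp
      ring
    · unfold selRate
      exact Finset.sum_congr rfl fun z _ => by rw [hπ'o c' hc']
  have hdisp : disp Y p π' = disp Y p π := by
    unfold disp; rw [hsel, hsel]
  -- utility strictly increases
  have hgain : 0 < t * p c y * p c y' * (y - y') := by
    have : 0 < y - y' := by linarith
    positivity
  have hutil : util Y p π' = util Y p π + t * p c y * p c y' * (y - y') := by
    unfold util
    have hgroup : ∑ z ∈ Y, p c z * z * π' c z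
        = (∑ z ∈ Y, p c z * z * π c z) + t * p c y * p c y' * (y - y') := by
      have := sum_diff_two hy hy' hne (fun z => p c z * z * π c z)
        (fun z => p c z * z * π' c z)
        (fun z _ h1 h2 => by rw [hπ'c, hqo z h1 h2])
      rw [this, hπ'c, hπ'c, hqy, hqy']
      ring
    have hother : ∀ c', c' ≠ c → ∑ z ∈ Y, p c' z * z * π' c' z
        = ∑ z ∈ Y, p c' z * z * π c' z :=
      fun c' hc' => Finset.sum_congr rfl fun z _ => by rw [hπ'o c' hc']
    cases c
    · rw [Fintype.sum_bool, Fintype.sum_bool, hother true (by simp), hgroup]; ring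
    · rw [Fintype.sum_bool, Fintype.sum_bool, hother false (by simp), hgroup]; ring
  have hobj : obj Y p g lam π < obj Y p g lam π' := by
    unfold obj
    rw [hdisp, hutil]
    linarith
  exact absurd (hmax π' hadm') (not_le.mpr hobj)
end
end

section
/- Suppose λ > 0 and let π be any optimal policy (maximizer of J). Then within each group at most one qualification level has a fractional selection probability: for every group c there exists y' ∈ 𝒴 such that for every y ≠ y' with p(y,c) > 0, one has π(c,y) ∈ {0,1}. -/
/-!
Static setting: `Y` is a finite set of nonzero real qualifications; the two groups
`A`/`B` are encoded as `true`/`false`; `p c y` is the joint pmf on group × qualification.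
-/

open Finset Filter Topology
open scoped Classical

noncomputable section

private lemma improve_aux (Y : Finset ℝ) (p : Bool → ℝ → ℝ) (hp : IsPMF Y p)
    (π : Bool → ℝ → ℝ) (hadm : Admissible Y π) (g : ℝ → ℝ) (lam : ℝ)
    (c : Bool) (y1 y2 : ℝ) (hy1 : y1 ∈ Y) (hy2 : y2 ∈ Y) (hlt : y2 < y1)
    (hp1 : 0 < p c y1) (hp2 : 0 < p c y2)
    (h10 : 0 < π c y1) (h11 : π c y1 < 1) (h20 : 0 < π c y2) (h21 : π c y2 < 1) :
    ∃ π', Admissible Y π' ∧ obj Y p g lam π < obj Y p g lam π' := by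
  set s := min ((1 - π c y1) * p c y1) (π c y2 * p c y2) with hs_def
  have hs : 0 < s := lt_min (mul_pos (by linarith) hp1) (mul_pos h20 hp2)
  have hney : y1 ≠ y2 := ne_of_gt hlt
  set π' : Bool → ℝ → ℝ := fun c' y =>
    if c' = c ∧ y = y1 then π c y1 + s / p c y1
    else if c' = c ∧ y = y2 then π c y2 - s / p c y2
    else π c' y with hπ'def
  have hd1 : s / p c y1 ≤ 1 - π c y1 := (div_le_iff₀ hp1).mpr (min_le_left _ _)
  have hd2 : s / p c y2 ≤ π c y2 := (div_le_iff₀ hp2).mpr (min_le_right _ _)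
  have hdp1 : 0 < s / p c y1 := div_pos hs hp1
  have hdp2 : 0 < s / p c y2 := div_pos hs hp2
  have hadm' : Admissible Y π' := by
    intro c' y hy
    by_cases h1' : c' = c ∧ y = y1
    · have : π' c' y = π c y1 + s / p c y1 := by simp [hπ'def, h1']
      rw [this]; constructor <;> linarith
    · by_cases h2' : c' = c ∧ y = y2
      · have : π' c' y = π c y2 - s / p c y2 := by
          simp only [hπ'def]
          rw [if_neg h1', if_pos h2']
        rw [this]; constructor <;> linarith
      · have : π' c' y = π c' y := by simp [hπ'def, h1', h2']
        rw [this]; exact hadm c' y hy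
  have hother : ∀ c', c' ≠ c → ∀ y, π' c' y = π c' y := by
    intro c' hc' y; simp [hπ'def, hc']
  have hsum : ∀ w : ℝ → ℝ, ∑ y ∈ Y, w y * π' c y
      = (∑ y ∈ Y, w y * π c y) + (w y1 * (s / p c y1) - w y2 * (s / p c y2)) := by
    intro w
    have hsub : ({y1, y2} : Finset ℝ) ⊆ Y := by
      intro z hz
      rcases Finset.mem_insert.mp hz with rfl | hz
      · exact hy1
      · rw [Finset.mem_singleton] at hz; subst hz; exact hy2
    have key : ∑ y ∈ Y, (w y * π' c y - w y * π c y)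
        = w y1 * (s / p c y1) - w y2 * (s / p c y2) := by
      rw [← Finset.sum_subset hsub (by
        intro y hyY hyn
        simp only [Finset.mem_insert, Finset.mem_singleton, not_or] at hyn
        have : π' c y = π c y := by simp [hπ'def, hyn.1, hyn.2]
        rw [this]; ring)]
      rw [Finset.sum_pair hney]
      have e1 : π' c y1 = π c y1 + s / p c y1 := by simp [hπ'def]
      have e2 : π' c y2 = π c y2 - s / p c y2 := by simp [hπ'def, hney, Ne.symm hney]
      rw [e1, e2]; ring
    rw [Finset.sum_sub_distrib] at key
    linarith
  have hsel : ∀ b, selRate Y p π' b = selRate Y p π b := by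
    intro b
    by_cases hb : b = c
    · rw [hb]
      unfold selRate
      have := hsum (fun y => pCond Y p c y)
      rw [this]
      have hz : pCond Y p c y1 * (s / p c y1) - pCond Y p c y2 * (s / p c y2) = 0 := by
        unfold pCond
        have hpg : pG Y p c ≠ 0 := ne_of_gt (hp.2.2.2 c)
        field_simp
        ring
      rw [hz, add_zero]
    · unfold selRate
      exact Finset.sum_congr rfl fun y hy => by rw [hother b hb y]
  have hdisp : disp Y p π' = disp Y p π := by
    unfold disp; rw [hsel true, hsel false]
  have hinner : ∀ c' : Bool, ∑ y ∈ Y, p c' y * y * π' c' y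
      = (∑ y ∈ Y, p c' y * y * π c' y) + (if c' = c then s * (y1 - y2) else 0) := by
    intro c'
    by_cases h : c' = c
    · simp only [if_pos h]
      rw [h]
      have := hsum (fun y => p c y * y)
      rw [this]
      have hz : p c y1 * y1 * (s / p c y1) - p c y2 * y2 * (s / p c y2)
          = s * (y1 - y2) := by field_simp
      rw [hz]
    · simp only [if_neg h, add_zero]
      exact Finset.sum_congr rfl fun y hy => by rw [hother c' h y]
  have hu : util Y p π' = util Y p π + s * (y1 - y2) := by
    unfold util
    rw [Finset.sum_congr rfl fun c' _ => hinner c', Finset.sum_add_distrib,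
      Finset.sum_ite_eq' Finset.univ c (fun _ => s * (y1 - y2))]
    simp
  refine ⟨π', hadm', ?_⟩
  unfold obj
  rw [hu, hdisp]
  have : 0 < s * (y1 - y2) := mul_pos hs (by linarith)
  linarith

/-- For `λ > 0`, under any optimal policy, within each group at most
one qualification level has a fractional selection probability. -/
theorem stmt_1 (Y : Finset ℝ) (p : Bool → ℝ → ℝ) (hp : IsPMF Y p)
    (g : ℝ → ℝ) (hg : AdmissiblePenalty g) (lam : ℝ) (hlam : 0 < lam)
    (π : Bool → ℝ → ℝ) (hopt : IsOptimal Y p g lam π) :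
    ∀ c : Bool, ∃ y' ∈ Y, ∀ y ∈ Y, y ≠ y' → 0 < p c y →
      π c y = 0 ∨ π c y = 1 := by
  obtain ⟨hadm, hmax⟩ := hopt
  intro c
  have hYne : Y.Nonempty := by
    by_contra h
    rw [Finset.not_nonempty_iff_eq_empty] at h
    have hpg := hp.2.2.2 c
    simp [pG, h] at hpg
  by_cases hFne : (Y.filter (fun y => 0 < p c y ∧ π c y ≠ 0 ∧ π c y ≠ 1)).Nonempty
  · obtain ⟨y', hy'F⟩ := hFne
    rw [Finset.mem_filter] at hy'F
    obtain ⟨hy'Y, hp', hπ'0, hπ'1⟩ := hy'F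
    refine ⟨y', hy'Y, ?_⟩
    intro y hy hne hpy
    by_contra hcon
    push_neg at hcon
    obtain ⟨h0, h1⟩ := hcon
    have hb := hadm c y hy
    have hb' := hadm c y' hy'Y
    have hf0 : 0 < π c y := lt_of_le_of_ne hb.1 (Ne.symm h0)
    have hf1 : π c y < 1 := lt_of_le_of_ne hb.2 h1
    have hf0' : 0 < π c y' := lt_of_le_of_ne hb'.1 (Ne.symm hπ'0)
    have hf1' : π c y' < 1 := lt_of_le_of_ne hb'.2 hπ'1
    rcases hne.lt_or_gt with h | h
    · obtain ⟨π2, ha2, hlt2⟩ :=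
        improve_aux Y p hp π hadm g lam c y' y hy'Y hy h hp' hpy hf0' hf1' hf0 hf1
      exact absurd (hmax π2 ha2) (not_le.mpr hlt2)
    · obtain ⟨π2, ha2, hlt2⟩ :=
        improve_aux Y p hp π hadm g lam c y y' hy hy'Y h hpy hp' hf0 hf1 hf0' hf1'
      exact absurd (hmax π2 ha2) (not_le.mpr hlt2)
  · refine ⟨hYne.choose, hYne.choose_spec, ?_⟩
    intro y hy hne hpy
    by_contra hcon
    push_neg at hcon
    exact hFne ⟨y, Finset.mem_filter.mpr ⟨hy, hpy, hcon.1, hcon.2⟩⟩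
end
end

section
/- Suppose Pr(Y>0|A) > Pr(Y>0|B). Then for any λ ≥ 0, any admissible penalty function g, and any optimal policy π (maximizer of J): negatively qualified individuals of group A are never selected and positively qualified individuals of group B are always selected, i.e., for every y < 0 with p(y,A) > 0 one has π(A,y) = 0, and for every y > 0 with p(y,B) > 0 one has π(B,y) = 1. -/
/-!
Static setting: `Y` is a finite set of nonzero real qualifications; the two groups
`A`/`B` are encoded as `true`/`false`; `p c y` is the joint pmf on group × qualification.
-/

open Finset Filter Topology
open scoped Classical

noncomputable section

/-- Update a policy at a single (group, qualification) coordinate. -/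
def upd (π : Bool → ℝ → ℝ) (c0 : Bool) (y0 v : ℝ) : Bool → ℝ → ℝ :=
  fun c y => if c = c0 ∧ y = y0 then v else π c y

lemma upd_ne (π : Bool → ℝ → ℝ) (c0 : Bool) (y0 v : ℝ) {c : Bool} {y : ℝ}
    (h : ¬ (c = c0 ∧ y = y0)) : upd π c0 y0 v c y = π c y := by
  simp [upd, h]

lemma sum_mul_upd {Y : Finset ℝ} (f π : ℝ → ℝ) {y0 : ℝ} (h : y0 ∈ Y) (v : ℝ) :
    ∑ y ∈ Y, f y * (if y = y0 then v else π y)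
      = (∑ y ∈ Y, f y * π y) + f y0 * (v - π y0) := by
  have hcong : ∀ y ∈ Y, f y * (if y = y0 then v else π y)
      = f y * π y + (if y = y0 then f y0 * (v - π y0) else 0) := by
    intro y _
    by_cases hy : y = y0
    · subst hy; simp; ring
    · simp [hy]
  rw [Finset.sum_congr rfl hcong, Finset.sum_add_distrib,
    Finset.sum_ite_eq' Y y0 (fun _ => f y0 * (v - π y0)), if_pos h]

lemma util_upd (Y : Finset ℝ) (p π : Bool → ℝ → ℝ) (c0 : Bool) {y0 : ℝ} (h : y0 ∈ Y) (v : ℝ) :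
    util Y p (upd π c0 y0 v) = util Y p π + p c0 y0 * y0 * (v - π c0 y0) := by
  have key : ∀ c : Bool, ∑ y ∈ Y, p c y * y * upd π c0 y0 v c y
      = (∑ y ∈ Y, p c y * y * π c y) + (if c = c0 then p c0 y0 * y0 * (v - π c0 y0) else 0) := by
    intro c
    by_cases hc : c = c0
    · subst hc
      have : ∀ y ∈ Y, p c y * y * upd π c y0 v c y
          = p c y * y * (if y = y0 then v else π c y) := by
        intro y _; simp [upd]
      rw [Finset.sum_congr rfl this, sum_mul_upd (fun y => p c y * y) (π c) h v]
      simp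
    · have : ∀ y ∈ Y, p c y * y * upd π c0 y0 v c y = p c y * y * π c y := by
        intro y _; rw [upd_ne]; tauto
      rw [Finset.sum_congr rfl this]
      simp [hc]
  simp only [util, Fintype.sum_bool, key]
  cases c0 <;> simp <;> ring

lemma selRate_upd (Y : Finset ℝ) (p π : Bool → ℝ → ℝ) (c0 : Bool) {y0 : ℝ} (h : y0 ∈ Y)
    (v : ℝ) (c : Bool) :
    selRate Y p (upd π c0 y0 v) c
      = selRate Y p π c + (if c = c0 then pCond Y p c0 y0 * (v - π c0 y0) else 0) := by
  by_cases hc : c = c0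
  · subst hc
    have : ∀ y ∈ Y, pCond Y p c y * upd π c y0 v c y
        = pCond Y p c y * (if y = y0 then v else π c y) := by
      intro y _; simp [upd]
    rw [selRate, Finset.sum_congr rfl this, sum_mul_upd (pCond Y p c) (π c) h v]
    simp [selRate]
  · have : ∀ y ∈ Y, pCond Y p c y * upd π c0 y0 v c y = pCond Y p c y * π c y := by
      intro y _; rw [upd_ne]; tauto
    rw [selRate, Finset.sum_congr rfl this]
    simp [selRate, hc]

lemma admissible_upd {Y : Finset ℝ} {π : Bool → ℝ → ℝ} (hadm : Admissible Y π)
    (c0 : Bool) (y0 : ℝ) {v : ℝ} (hv0 : 0 ≤ v) (hv1 : v ≤ 1) :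
    Admissible Y (upd π c0 y0 v) := by
  intro c y hy
  by_cases h : c = c0 ∧ y = y0
  · simp [upd, h]; exact ⟨hv0, hv1⟩
  · rw [upd_ne _ _ _ _ h]; exact hadm c y hy

lemma disp_nonneg (Y : Finset ℝ) (p π : Bool → ℝ → ℝ) : 0 ≤ disp Y p π := by
  unfold disp; exact abs_nonneg _

lemma improve {Y : Finset ℝ} {p : Bool → ℝ → ℝ} {g : ℝ → ℝ} {lam : ℝ} {π π' : Bool → ℝ → ℝ}
    (hg : AdmissiblePenalty g) (hlam : 0 ≤ lam) (hopt : IsOptimal Y p g lam π)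
    (hadm' : Admissible Y π') (hu : util Y p π < util Y p π')
    (hd : disp Y p π' ≤ disp Y p π) : False := by
  have h1 := hopt.2 π' hadm'
  have hgle : g (disp Y p π') ≤ g (disp Y p π) :=
    hg.2.1 (Set.mem_Ici.mpr (disp_nonneg Y p π')) (Set.mem_Ici.mpr (disp_nonneg Y p π)) hd
  have h2 : lam * g (disp Y p π') ≤ lam * g (disp Y p π) :=
    mul_le_mul_of_nonneg_left hgle hlam
  simp only [obj] at h1
  linarith

lemma move {Y : Finset ℝ} {p : Bool → ℝ → ℝ} {g : ℝ → ℝ} {lam : ℝ} {π : Bool → ℝ → ℝ}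
    (hg : AdmissiblePenalty g) (hlam : 0 ≤ lam) (hopt : IsOptimal Y p g lam π)
    (c1 c2 : Bool) {y1 y2 : ℝ} (hy1 : y1 ∈ Y) (hy2 : y2 ∈ Y)
    (hne : ¬ (c2 = c1 ∧ y2 = y1)) (t1 t2 : ℝ)
    (h10 : 0 ≤ π c1 y1 + t1) (h11 : π c1 y1 + t1 ≤ 1)
    (h20 : 0 ≤ π c2 y2 + t2) (h21 : π c2 y2 + t2 ≤ 1)
    (hu : 0 < p c1 y1 * y1 * t1 + p c2 y2 * y2 * t2)
    (hd : |selRate Y p π true - selRate Y p π false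
        + (((if (true:Bool) = c1 then pCond Y p c1 y1 * t1 else 0)
            + (if (true:Bool) = c2 then pCond Y p c2 y2 * t2 else 0))
          - ((if (false:Bool) = c1 then pCond Y p c1 y1 * t1 else 0)
            + (if (false:Bool) = c2 then pCond Y p c2 y2 * t2 else 0)))|
        ≤ disp Y p π) : False := by
  set π1 := upd π c1 y1 (π c1 y1 + t1) with hπ1
  set π' := upd π1 c2 y2 (π c2 y2 + t2) with hπ'
  have hπ1v : π1 c2 y2 = π c2 y2 := upd_ne _ _ _ _ hne
  have hadm' : Admissible Y π' :=
    admissible_upd (admissible_upd hopt.1 c1 y1 h10 h11) c2 y2 h20 h21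
  have hutil : util Y p π' = util Y p π + (p c1 y1 * y1 * t1 + p c2 y2 * y2 * t2) := by
    rw [hπ', util_upd Y p π1 c2 hy2, hπ1v, hπ1, util_upd Y p π c1 hy1]
    ring
  have hsel : ∀ c, selRate Y p π' c = selRate Y p π c
      + ((if c = c1 then pCond Y p c1 y1 * t1 else 0)
        + (if c = c2 then pCond Y p c2 y2 * t2 else 0)) := by
    intro c
    rw [hπ', selRate_upd Y p π1 c2 hy2, hπ1v, hπ1, selRate_upd Y p π c1 hy1]
    have e1 : π c1 y1 + t1 - π c1 y1 = t1 := by ring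
    have e2 : π c2 y2 + t2 - π c2 y2 = t2 := by ring
    rw [e1, e2]; ring
  have hdisp : disp Y p π' ≤ disp Y p π := by
    rw [disp, hsel true, hsel false]
    calc |selRate Y p π true
          + ((if (true:Bool) = c1 then pCond Y p c1 y1 * t1 else 0)
            + (if (true:Bool) = c2 then pCond Y p c2 y2 * t2 else 0))
          - (selRate Y p π false
          + ((if (false:Bool) = c1 then pCond Y p c1 y1 * t1 else 0)
            + (if (false:Bool) = c2 then pCond Y p c2 y2 * t2 else 0)))|
        = |selRate Y p π true - selRate Y p π false
          + (((if (true:Bool) = c1 then pCond Y p c1 y1 * t1 else 0)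
              + (if (true:Bool) = c2 then pCond Y p c2 y2 * t2 else 0))
            - ((if (false:Bool) = c1 then pCond Y p c1 y1 * t1 else 0)
              + (if (false:Bool) = c2 then pCond Y p c2 y2 * t2 else 0)))| := by
          congr 1; ring
      _ ≤ disp Y p π := hd
  exact improve hg hlam hopt hadm' (by rw [hutil]; linarith) hdisp

lemma pCond_nonneg {Y : Finset ℝ} {p : Bool → ℝ → ℝ} (hp : IsPMF Y p) (c : Bool)
    {y : ℝ} (hy : y ∈ Y) : 0 ≤ pCond Y p c y :=
  div_nonneg (hp.2.1 c y hy) (hp.2.2.2 c).le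

lemma pCond_pos {Y : Finset ℝ} {p : Bool → ℝ → ℝ} (hp : IsPMF Y p) (c : Bool)
    {y : ℝ} (hpos : 0 < p c y) : 0 < pCond Y p c y :=
  div_pos hpos (hp.2.2.2 c)

lemma selRate_le_posRate {Y : Finset ℝ} {p π : Bool → ℝ → ℝ} (hp : IsPMF Y p)
    (hadm : Admissible Y π) (c : Bool)
    (hnull : ∀ y ∈ Y, y < 0 → 0 < p c y → π c y = 0) :
    selRate Y p π c ≤ posRate Y p c := by
  rw [selRate, ← Finset.sum_filter_add_sum_filter_not Y (fun y => 0 < y)]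
  have h1 : ∑ y ∈ Y.filter (fun y => 0 < y), pCond Y p c y * π c y ≤ posRate Y p c := by
    rw [posRate]
    refine Finset.sum_le_sum (fun y hy => ?_)
    have hyY := Finset.mem_filter.mp hy |>.1
    exact mul_le_of_le_one_right (pCond_nonneg hp c hyY) (hadm c y hyY).2
  have h2 : ∑ y ∈ Y.filter (fun y => ¬ 0 < y), pCond Y p c y * π c y = 0 := by
    refine Finset.sum_eq_zero (fun y hy => ?_)
    obtain ⟨hyY, hyn⟩ := Finset.mem_filter.mp hy
    have hyneg : y < 0 := lt_of_le_of_ne (not_lt.mp hyn) (hp.1 y hyY)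
    rcases lt_or_eq_of_le (hp.2.1 c y hyY) with hpp | hpp
    · rw [hnull y hyY hyneg hpp, mul_zero]
    · rw [pCond, ← hpp, zero_div, zero_mul]
  linarith

lemma posRate_le_selRate {Y : Finset ℝ} {p π : Bool → ℝ → ℝ} (hp : IsPMF Y p)
    (hadm : Admissible Y π) (c : Bool)
    (hfull : ∀ y ∈ Y, 0 < y → 0 < p c y → π c y = 1) :
    posRate Y p c ≤ selRate Y p π c := by
  rw [selRate, ← Finset.sum_filter_add_sum_filter_not Y (fun y => 0 < y)]
  have h1 : posRate Y p c = ∑ y ∈ Y.filter (fun y => 0 < y), pCond Y p c y * π c y := by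
    rw [posRate]
    refine Finset.sum_congr rfl (fun y hy => ?_)
    obtain ⟨hyY, hyp⟩ := Finset.mem_filter.mp hy
    rcases lt_or_eq_of_le (hp.2.1 c y hyY) with hpp | hpp
    · rw [hfull y hyY hyp hpp, mul_one]
    · rw [pCond, ← hpp, zero_div, zero_mul]
  have h2 : 0 ≤ ∑ y ∈ Y.filter (fun y => ¬ 0 < y), pCond Y p c y * π c y := by
    refine Finset.sum_nonneg (fun y hy => ?_)
    have hyY := Finset.mem_filter.mp hy |>.1
    exact mul_nonneg (pCond_nonneg hp c hyY) (hadm c y hyY).1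
  linarith

lemma if_tf (x y : ℝ) : (if (true:Bool) = false then x else y) = y := if_neg (by decide)
lemma if_ft (x y : ℝ) : (if (false:Bool) = true then x else y) = y := if_neg (by decide)
lemma if_tt (x y : ℝ) : (if (true:Bool) = true then x else y) = x := if_pos rfl
lemma if_ff (x y : ℝ) : (if (false:Bool) = false then x else y) = x := if_pos rfl


/-- If `Pr(Y>0|A) > Pr(Y>0|B)`, then under any optimal policy,
negatively qualified members of group `A` are never selected and positively
qualified members of group `B` are always selected. -/
theorem stmt_3 (Y : Finset ℝ) (p : Bool → ℝ → ℝ) (hp : IsPMF Y p)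
    (hadv : posRate Y p false < posRate Y p true)
    (g : ℝ → ℝ) (hg : AdmissiblePenalty g) (lam : ℝ) (hlam : 0 ≤ lam)
    (π : Bool → ℝ → ℝ) (hopt : IsOptimal Y p g lam π) :
    (∀ y ∈ Y, y < 0 → 0 < p true y → π true y = 0) ∧
    (∀ y ∈ Y, 0 < y → 0 < p false y → π false y = 1) := by
  have hadm := hopt.1
  constructor
  · -- Claim A
    intro y0 hy0 hyneg hpA
    by_contra hne0
    have hπ0 : 0 < π true y0 := lt_of_le_of_ne (hadm true y0 hy0).1 (Ne.symm hne0)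
    have ha : 0 < pCond Y p true y0 := pCond_pos hp true hpA
    by_cases hi : ∃ y2 ∈ Y, 0 < y2 ∧ 0 < p true y2 ∧ π true y2 < 1
    · -- subcase (i): compensate within group A
      obtain ⟨y2, hy2, hy2pos, hp2, hπ2⟩ := hi
      have hb : 0 < pCond Y p true y2 := pCond_pos hp true hp2
      set a := pCond Y p true y0 with ha_def
      set b := pCond Y p true y2 with hb_def
      set ε := min (π true y0) (b * (1 - π true y2) / a) with hε_def
      have hε : 0 < ε := lt_min hπ0 (div_pos (mul_pos hb (by linarith)) ha)
      have hε1 : ε ≤ π true y0 := min_le_left _ _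
      have hε2 : ε ≤ b * (1 - π true y2) / a := min_le_right _ _
      have hδle : a * ε / b ≤ 1 - π true y2 := by
        rw [div_le_iff₀ hb]
        rw [le_div_iff₀ ha] at hε2
        nlinarith
      have hδnn : 0 ≤ a * ε / b := le_of_lt (div_pos (mul_pos ha hε) hb)
      refine move hg hlam hopt true true hy0 hy2
        (by rintro ⟨-, h⟩; rw [h] at hy2pos; linarith) (-ε) (a * ε / b)
        (by linarith) (by linarith [(hadm true y0 hy0).2]) (by linarith [(hadm true y2 hy2).1])
        (by linarith) ?_ ?_
      · have t1 : 0 < p true y0 * y0 * (-ε) := by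
          have h := mul_pos (mul_pos hpA hε) (neg_pos.mpr hyneg)
          nlinarith [h]
        have t2 : 0 ≤ p true y2 * y2 * (a * ε / b) :=
          mul_nonneg (mul_nonneg hp2.le hy2pos.le) hδnn
        linarith
      · have hcanc : b * (a * ε / b) = a * ε := by field_simp
        simp only [if_tf, if_ft, if_tt, if_ff, if_true]
        rw [disp]
        apply le_of_eq
        congr 1
        linarith [hcanc]
    · by_cases hii : ∃ y1 ∈ Y, y1 < 0 ∧ 0 < p false y1 ∧ 0 < π false y1
      · -- subcase (ii): compensate through group B
        obtain ⟨y1, hy1, hy1neg, hp1, hπ1⟩ := hii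
        have hc : 0 < pCond Y p false y1 := pCond_pos hp false hp1
        set a := pCond Y p true y0 with ha_def
        set cB := pCond Y p false y1 with hc_def
        set ε := min (π true y0) (cB * π false y1 / a) with hε_def
        have hε : 0 < ε := lt_min hπ0 (div_pos (mul_pos hc hπ1) ha)
        have hε1 : ε ≤ π true y0 := min_le_left _ _
        have hε2 : ε ≤ cB * π false y1 / a := min_le_right _ _
        have hδle : a * ε / cB ≤ π false y1 := by
          rw [div_le_iff₀ hc]
          rw [le_div_iff₀ ha] at hε2
          nlinarith
        have hδnn : 0 ≤ a * ε / cB := le_of_lt (div_pos (mul_pos ha hε) hc)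
        refine move hg hlam hopt true false hy0 hy1
          (by rintro ⟨h, -⟩; exact Bool.noConfusion h) (-ε) (-(a * ε / cB))
          (by linarith) (by linarith [(hadm true y0 hy0).2]) (by linarith)
          (by linarith [(hadm false y1 hy1).2]) ?_ ?_
        · have t1 : 0 < p true y0 * y0 * (-ε) := by
            have h := mul_pos (mul_pos hpA hε) (neg_pos.mpr hyneg)
            nlinarith [h]
          have t2 : 0 ≤ p false y1 * y1 * (-(a * ε / cB)) := by
            have h := mul_nonneg (mul_nonneg hp1.le hδnn) (neg_nonneg.mpr hy1neg.le)
            nlinarith [h]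
          linarith
        · have hcanc : cB * (a * ε / cB) = a * ε := by field_simp
          simp only [if_tf, if_ft, if_tt, if_ff, if_true]
          rw [disp]
          apply le_of_eq
          congr 1
          linarith [hcanc]
      · -- subcase (iii): group A strictly ahead, just deselect
        push_neg at hi hii
        have hfullA : ∀ y ∈ Y, 0 < y → 0 < p true y → π true y = 1 := fun y hy h1 h2 =>
          le_antisymm (hadm true y hy).2 (hi y hy h1 h2)
        have hnullB : ∀ y ∈ Y, y < 0 → 0 < p false y → π false y = 0 := fun y hy h1 h2 =>
          le_antisymm (hii y hy h1 h2) (hadm false y hy).1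
        have hSA := posRate_le_selRate hp hadm true hfullA
        have hSB := selRate_le_posRate hp hadm false hnullB
        have hD : 0 < selRate Y p π true - selRate Y p π false := by linarith
        set a := pCond Y p true y0 with ha_def
        set D := selRate Y p π true - selRate Y p π false with hD_def
        set ε := min (π true y0) (D / a) with hε_def
        have hε : 0 < ε := lt_min hπ0 (div_pos hD ha)
        have hε1 : ε ≤ π true y0 := min_le_left _ _
        have hε2 : a * ε ≤ D := by
          have h : ε ≤ D / a := min_le_right _ _
          rw [le_div_iff₀ ha] at h
          linarith
        refine move hg hlam hopt true false hy0 hy0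
          (by rintro ⟨h, -⟩; exact Bool.noConfusion h) (-ε) 0
          (by linarith) (by linarith [(hadm true y0 hy0).2]) (by linarith [(hadm false y0 hy0).1])
          (by linarith [(hadm false y0 hy0).2]) ?_ ?_
        · have t1 : 0 < p true y0 * y0 * (-ε) := by
            have h := mul_pos (mul_pos hpA hε) (neg_pos.mpr hyneg)
            nlinarith [h]
          have t2 : p false y0 * y0 * 0 = 0 := mul_zero _
          linarith
        · simp only [if_tf, if_ft, if_tt, if_ff, if_true, mul_zero]
          rw [disp, ← hD_def, abs_of_pos hD, abs_le]
          constructor <;> linarith [hε2, mul_pos ha hε]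
  · -- Claim B
    intro y0 hy0 hypos hpB
    by_contra hne1
    have hπ0 : π false y0 < 1 := lt_of_le_of_ne (hadm false y0 hy0).2 hne1
    have hb : 0 < pCond Y p false y0 := pCond_pos hp false hpB
    by_cases hi : ∃ y3 ∈ Y, y3 < 0 ∧ 0 < p false y3 ∧ 0 < π false y3
    · -- subcase (i): compensate within group B
      obtain ⟨y3, hy3, hy3neg, hp3, hπ3⟩ := hi
      have hc : 0 < pCond Y p false y3 := pCond_pos hp false hp3
      set b := pCond Y p false y0 with hb_def
      set c3 := pCond Y p false y3 with hc_def
      set ε := min (1 - π false y0) (c3 * π false y3 / b) with hε_def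
      have hε : 0 < ε := lt_min (by linarith) (div_pos (mul_pos hc hπ3) hb)
      have hε1 : ε ≤ 1 - π false y0 := min_le_left _ _
      have hε2 : ε ≤ c3 * π false y3 / b := min_le_right _ _
      have hδle : b * ε / c3 ≤ π false y3 := by
        rw [div_le_iff₀ hc]
        rw [le_div_iff₀ hb] at hε2
        nlinarith
      have hδnn : 0 ≤ b * ε / c3 := le_of_lt (div_pos (mul_pos hb hε) hc)
      refine move hg hlam hopt false false hy0 hy3
        (by rintro ⟨-, h⟩; rw [h] at hy3neg; linarith) ε (-(b * ε / c3))
        (by linarith [(hadm false y0 hy0).1]) (by linarith) (by linarith)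
        (by linarith [(hadm false y3 hy3).2]) ?_ ?_
      · have t1 : 0 < p false y0 * y0 * ε := mul_pos (mul_pos hpB hypos) hε
        have t2 : 0 ≤ p false y3 * y3 * (-(b * ε / c3)) := by
          have h := mul_nonneg (mul_nonneg hp3.le hδnn) (neg_nonneg.mpr hy3neg.le)
          nlinarith [h]
        linarith
      · have hcanc : c3 * (b * ε / c3) = b * ε := by field_simp
        simp only [if_tf, if_ft, if_tt, if_ff, if_true]
        rw [disp]
        apply le_of_eq
        congr 1
        linarith [hcanc]
    · by_cases hii : ∃ y2 ∈ Y, 0 < y2 ∧ 0 < p true y2 ∧ π true y2 < 1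
      · -- subcase (ii): compensate through group A
        obtain ⟨y2, hy2, hy2pos, hp2, hπ2⟩ := hii
        have hc : 0 < pCond Y p true y2 := pCond_pos hp true hp2
        set b := pCond Y p false y0 with hb_def
        set c2 := pCond Y p true y2 with hc_def
        set ε := min (1 - π false y0) (c2 * (1 - π true y2) / b) with hε_def
        have hε : 0 < ε := lt_min (by linarith) (div_pos (mul_pos hc (by linarith)) hb)
        have hε1 : ε ≤ 1 - π false y0 := min_le_left _ _
        have hε2 : ε ≤ c2 * (1 - π true y2) / b := min_le_right _ _
        have hδle : b * ε / c2 ≤ 1 - π true y2 := by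
          rw [div_le_iff₀ hc]
          rw [le_div_iff₀ hb] at hε2
          nlinarith
        have hδnn : 0 ≤ b * ε / c2 := le_of_lt (div_pos (mul_pos hb hε) hc)
        refine move hg hlam hopt false true hy0 hy2
          (by rintro ⟨h, -⟩; exact Bool.noConfusion h) ε (b * ε / c2)
          (by linarith [(hadm false y0 hy0).1]) (by linarith) (by linarith [(hadm true y2 hy2).1])
          (by linarith) ?_ ?_
        · have t1 : 0 < p false y0 * y0 * ε := mul_pos (mul_pos hpB hypos) hε
          have t2 : 0 ≤ p true y2 * y2 * (b * ε / c2) :=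
            mul_nonneg (mul_nonneg hp2.le hy2pos.le) hδnn
          linarith
        · have hcanc : c2 * (b * ε / c2) = b * ε := by field_simp
          simp only [if_tf, if_ft, if_tt, if_ff, if_true]
          rw [disp]
          apply le_of_eq
          congr 1
          linarith [hcanc]
      · -- subcase (iii): group A strictly ahead, just select more of B
        push_neg at hi hii
        have hnullB : ∀ y ∈ Y, y < 0 → 0 < p false y → π false y = 0 := fun y hy h1 h2 =>
          le_antisymm (hi y hy h1 h2) (hadm false y hy).1
        have hfullA : ∀ y ∈ Y, 0 < y → 0 < p true y → π true y = 1 := fun y hy h1 h2 =>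
          le_antisymm (hadm true y hy).2 (hii y hy h1 h2)
        have hSA := posRate_le_selRate hp hadm true hfullA
        have hSB := selRate_le_posRate hp hadm false hnullB
        have hD : 0 < selRate Y p π true - selRate Y p π false := by linarith
        set b := pCond Y p false y0 with hb_def
        set D := selRate Y p π true - selRate Y p π false with hD_def
        set ε := min (1 - π false y0) (D / b) with hε_def
        have hε : 0 < ε := lt_min (by linarith) (div_pos hD hb)
        have hε1 : ε ≤ 1 - π false y0 := min_le_left _ _
        have hε2 : b * ε ≤ D := by
          have h : ε ≤ D / b := min_le_right _ _
          rw [le_div_iff₀ hb] at h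
          linarith
        refine move hg hlam hopt false true hy0 hy0
          (by rintro ⟨h, -⟩; exact Bool.noConfusion h) ε 0
          (by linarith [(hadm false y0 hy0).1]) (by linarith) (by linarith [(hadm true y0 hy0).1])
          (by linarith [(hadm true y0 hy0).2]) ?_ ?_
        · have t1 : 0 < p false y0 * y0 * ε := mul_pos (mul_pos hpB hypos) hε
          have t2 : p true y0 * y0 * 0 = 0 := mul_zero _
          linarith
        · simp only [if_tf, if_ft, if_tt, if_ff, if_true, mul_zero]
          rw [disp, ← hD_def, abs_of_pos hD, abs_le]
          constructor <;> linarith [hε2, mul_pos hb hε]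
end
end

section
/- (Full-satisfaction criterion.) Assume Δ_UM > 0. The penalty (g, λ) is fully satisfactory — i.e., at least one maximizer π of J satisfies Δ(π) = 0, equivalently the maximum of J over all policies equals the maximum of U(π) over policies constrained by S_A(π) = S_B(π) — if and only if β_s ≤ λ·g'_+(0), where g'_+(0) is the right derivative of g at 0, and β_s is defined as follows: let π* be any maximizer of U over policies with S_A = S_B, let 𝒯_s = {(y,A) : y > 0, p(y|A) > 0, π*(A,y) < 1} ∪ {(y,B) : y < 0, p(y|B) > 0, π*(B,y) > 0}, and set β_s = max_{(y,c) ∈ 𝒯_s} p(c)·|y| (this value does not depend on the chosen maximizer π*). -/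
/-!
Static setting: `Y` is a finite set of nonzero real qualifications; the two groups
`A`/`B` are encoded as `true`/`false`; `p c y` is the joint pmf on group × qualification.
-/

open Finset Filter Topology
open scoped Classical

noncomputable section

/-- The index set `𝒯_s`, relative to a parity-optimal policy `πs`. -/
def TS (Y : Finset ℝ) (p : Bool → ℝ → ℝ) (πs : Bool → ℝ → ℝ) : Finset (ℝ × Bool) :=
  (Y ×ˢ (Finset.univ : Finset Bool)).filter
    (fun yc => (yc.2 = true ∧ 0 < yc.1 ∧ 0 < pCond Y p true yc.1 ∧ πs true yc.1 < 1) ∨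
               (yc.2 = false ∧ yc.1 < 0 ∧ 0 < pCond Y p false yc.1 ∧ 0 < πs false yc.1))
namespace Stmt6

variable {Y : Finset ℝ} {p : Bool → ℝ → ℝ}

lemma pG_pos (hp : IsPMF Y p) (c : Bool) : 0 < pG Y p c := hp.2.2.2 c

lemma pCond_nonneg (hp : IsPMF Y p) {c : Bool} {y : ℝ} (hy : y ∈ Y) :
    0 ≤ pCond Y p c y := div_nonneg (hp.2.1 c y hy) (pG_pos hp c).le

lemma p_eq (hp : IsPMF Y p) (c : Bool) (y : ℝ) :
    p c y = pG Y p c * pCond Y p c y := by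
  unfold pCond; rw [mul_comm, div_mul_cancel₀ _ (pG_pos hp c).ne']

/-- one-point perturbation of a policy -/
def pert (π : Bool → ℝ → ℝ) (c₀ : Bool) (y₀ : ℝ) (t : ℝ) : Bool → ℝ → ℝ :=
  fun c y => if c = c₀ ∧ y = y₀ then π c y + t else π c y

lemma pert_self (π : Bool → ℝ → ℝ) (c₀ : Bool) (y₀ t : ℝ) :
    pert π c₀ y₀ t c₀ y₀ = π c₀ y₀ + t := if_pos ⟨rfl, rfl⟩

lemma pert_ne (π : Bool → ℝ → ℝ) {c₀ c : Bool} {y₀ y : ℝ} (t : ℝ)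
    (h : ¬(c = c₀ ∧ y = y₀)) : pert π c₀ y₀ t c y = π c y := if_neg h

lemma adm_pert {π : Bool → ℝ → ℝ} {c₀ : Bool} {y₀ t : ℝ} (h : Admissible Y π)
    (h0 : 0 ≤ π c₀ y₀ + t) (h1 : π c₀ y₀ + t ≤ 1) : Admissible Y (pert π c₀ y₀ t) := by
  intro c y hy
  unfold pert
  split_ifs with h'
  · obtain ⟨rfl, rfl⟩ := h'; exact ⟨h0, h1⟩
  · exact h c y hy

lemma sum_pert1 (π : Bool → ℝ → ℝ) (c₀ c : Bool) {y₀ : ℝ} (t : ℝ) (hy₀ : y₀ ∈ Y)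
    (f : ℝ → ℝ) :
    ∑ y ∈ Y, f y * pert π c₀ y₀ t c y
      = (∑ y ∈ Y, f y * π c y) + (if c = c₀ then f y₀ * t else 0) := by
  have h : ∀ y, f y * pert π c₀ y₀ t c y
      = f y * π c y + (if c = c₀ ∧ y = y₀ then f y * t else 0) := by
    intro y; unfold pert; split_ifs <;> ring
  simp_rw [h, Finset.sum_add_distrib]
  congr 1
  by_cases hc : c = c₀
  · simp [hc, Finset.sum_ite_eq', hy₀]
  · simp [hc]

lemma selRate_pert (π : Bool → ℝ → ℝ) (c₀ c : Bool) {y₀ : ℝ} (t : ℝ) (hy₀ : y₀ ∈ Y) :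
    selRate Y p (pert π c₀ y₀ t) c
      = selRate Y p π c + (if c = c₀ then pCond Y p c y₀ * t else 0) := by
  unfold selRate
  exact sum_pert1 π c₀ c t hy₀ _

lemma util_pert (π : Bool → ℝ → ℝ) (c₀ : Bool) {y₀ : ℝ} (t : ℝ) (hy₀ : y₀ ∈ Y) :
    util Y p (pert π c₀ y₀ t) = util Y p π + p c₀ y₀ * y₀ * t := by
  unfold util
  simp_rw [Fintype.sum_bool,
    sum_pert1 π c₀ true t hy₀ (fun y => p true y * y),
    sum_pert1 π c₀ false t hy₀ (fun y => p false y * y)]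
  cases c₀ <;> norm_num <;> ring

section Exchange

variable {πs : Bool → ℝ → ℝ}

/-- Pattern 1: raise selection at `(true,a)` and `(false,b)` simultaneously. -/
lemma P1 (hp : IsPMF Y p) (hπs : Admissible Y πs)
    (hpar : selRate Y p πs true = selRate Y p πs false)
    (hπsopt : ∀ π', Admissible Y π' → selRate Y p π' true = selRate Y p π' false →
      util Y p π' ≤ util Y p πs)
    {a b : ℝ} (ha : a ∈ Y) (hb : b ∈ Y)
    (hqa : 0 < pCond Y p true a) (hqb : 0 < pCond Y p false b)
    (hsa : πs true a < 1) (hsb : πs false b < 1)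
    (hgain : 0 < pG Y p true * a + pG Y p false * b) : False := by
  set qa := pCond Y p true a with hqa'
  set qb := pCond Y p false b with hqb'
  set ε := min (qa * (1 - πs true a)) (qb * (1 - πs false b)) with hε
  have hε0 : 0 < ε := lt_min (mul_pos hqa (by linarith)) (mul_pos hqb (by linarith))
  have hεa : ε / qa ≤ 1 - πs true a := by
    rw [div_le_iff₀ hqa]; calc ε ≤ qa * (1 - πs true a) := min_le_left _ _
                           _ = (1 - πs true a) * qa := mul_comm _ _
  have hεb : ε / qb ≤ 1 - πs false b := by
    rw [div_le_iff₀ hqb]; calc ε ≤ qb * (1 - πs false b) := min_le_right _ _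
                           _ = (1 - πs false b) * qb := mul_comm _ _
  set π₁ := pert πs true a (ε / qa) with hπ₁
  set π₂ := pert π₁ false b (ε / qb) with hπ₂
  have hadm₁ : Admissible Y π₁ := by
    refine adm_pert hπs ?_ ?_
    · have := (hπs true a ha).1; positivity
    · linarith
  have h1b : π₁ false b = πs false b := pert_ne πs _ (by simp)
  have hadm₂ : Admissible Y π₂ := by
    refine adm_pert hadm₁ ?_ ?_ <;> rw [h1b]
    · have := (hπs false b hb).1; positivity
    · linarith
  have hqa0 : qa * (ε / qa) = ε := by field_simp
  have hqb0 : qb * (ε / qb) = ε := by field_simp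
  have hsT : selRate Y p π₂ true = selRate Y p πs true + ε := by
    rw [hπ₂, selRate_pert _ _ _ _ hb, hπ₁, selRate_pert _ _ _ _ ha]
    simp [hqa0]; exact hqa0
  have hsF : selRate Y p π₂ false = selRate Y p πs false + ε := by
    rw [hπ₂, selRate_pert _ _ _ _ hb, hπ₁, selRate_pert _ _ _ _ ha]
    simp [hqb0]; exact hqb0
  have hparen : selRate Y p π₂ true = selRate Y p π₂ false := by
    rw [hsT, hsF, hpar]
  have hut : util Y p π₂ = util Y p πs + (pG Y p true * a + pG Y p false * b) * ε := by
    rw [hπ₂, util_pert _ _ _ hb, hπ₁, util_pert _ _ _ ha,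
      p_eq hp true a, p_eq hp false b]
    field_simp
    ring
  have := hπsopt π₂ hadm₂ hparen
  nlinarith [mul_pos hgain hε0]

/-- Pattern 2: lower selection at `(true,a)` and `(false,b)` simultaneously. -/
lemma P2 (hp : IsPMF Y p) (hπs : Admissible Y πs)
    (hpar : selRate Y p πs true = selRate Y p πs false)
    (hπsopt : ∀ π', Admissible Y π' → selRate Y p π' true = selRate Y p π' false →
      util Y p π' ≤ util Y p πs)
    {a b : ℝ} (ha : a ∈ Y) (hb : b ∈ Y)
    (hqa : 0 < pCond Y p true a) (hqb : 0 < pCond Y p false b)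
    (hsa : 0 < πs true a) (hsb : 0 < πs false b)
    (hgain : pG Y p true * a + pG Y p false * b < 0) : False := by
  set qa := pCond Y p true a with hqa'
  set qb := pCond Y p false b with hqb'
  set ε := min (qa * πs true a) (qb * πs false b) with hε
  have hε0 : 0 < ε := lt_min (mul_pos hqa hsa) (mul_pos hqb hsb)
  have hεa : ε / qa ≤ πs true a := by
    rw [div_le_iff₀ hqa]; calc ε ≤ qa * πs true a := min_le_left _ _
                           _ = πs true a * qa := mul_comm _ _
  have hεb : ε / qb ≤ πs false b := by
    rw [div_le_iff₀ hqb]; calc ε ≤ qb * πs false b := min_le_right _ _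
                           _ = πs false b * qb := mul_comm _ _
  set π₁ := pert πs true a (-(ε / qa)) with hπ₁
  set π₂ := pert π₁ false b (-(ε / qb)) with hπ₂
  have hadm₁ : Admissible Y π₁ := by
    refine adm_pert hπs (by linarith) ?_
    have h1 := (hπs true a ha).2
    have : 0 < ε / qa := by positivity
    linarith
  have h1b : π₁ false b = πs false b := pert_ne πs _ (by simp)
  have hadm₂ : Admissible Y π₂ := by
    refine adm_pert hadm₁ ?_ ?_ <;> rw [h1b]
    · linarith
    · have h1 := (hπs false b hb).2
      have : 0 < ε / qb := by positivity
      linarith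
  have hqa0 : qa * (ε / qa) = ε := by field_simp
  have hqb0 : qb * (ε / qb) = ε := by field_simp
  have hsT : selRate Y p π₂ true = selRate Y p πs true - ε := by
    rw [hπ₂, selRate_pert _ _ _ _ hb, hπ₁, selRate_pert _ _ _ _ ha]
    simp [mul_neg, hqa0]; rw [show pCond Y p true a * (ε / qa) = ε from hqa0]; ring
  have hsF : selRate Y p π₂ false = selRate Y p πs false - ε := by
    rw [hπ₂, selRate_pert _ _ _ _ hb, hπ₁, selRate_pert _ _ _ _ ha]
    simp [mul_neg, hqb0]; rw [show pCond Y p false b * (ε / qb) = ε from hqb0]; ring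
  have hparen : selRate Y p π₂ true = selRate Y p π₂ false := by
    rw [hsT, hsF, hpar]
  have hut : util Y p π₂ = util Y p πs - (pG Y p true * a + pG Y p false * b) * ε := by
    rw [hπ₂, util_pert _ _ _ hb, hπ₁, util_pert _ _ _ ha,
      p_eq hp true a, p_eq hp false b]
    field_simp
    ring
  have := hπsopt π₂ hadm₂ hparen
  nlinarith [mul_pos (neg_pos.mpr hgain) hε0]

/-- Pattern 3: within group `c`, raise at `a` and lower at `b`. -/
lemma P3 (hp : IsPMF Y p) (hπs : Admissible Y πs)
    (hpar : selRate Y p πs true = selRate Y p πs false)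
    (hπsopt : ∀ π', Admissible Y π' → selRate Y p π' true = selRate Y p π' false →
      util Y p π' ≤ util Y p πs)
    (c : Bool) {a b : ℝ} (ha : a ∈ Y) (hb : b ∈ Y)
    (hqa : 0 < pCond Y p c a) (hqb : 0 < pCond Y p c b)
    (hsa : πs c a < 1) (hsb : 0 < πs c b)
    (hgain : pG Y p c * b < pG Y p c * a) : False := by
  have hab : b < a := lt_of_mul_lt_mul_left hgain (pG_pos hp c).le
  set qa := pCond Y p c a with hqa'
  set qb := pCond Y p c b with hqb'
  set ε := min (qa * (1 - πs c a)) (qb * πs c b) with hε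
  have hε0 : 0 < ε := lt_min (mul_pos hqa (by linarith)) (mul_pos hqb hsb)
  have hεa : ε / qa ≤ 1 - πs c a := by
    rw [div_le_iff₀ hqa]; calc ε ≤ qa * (1 - πs c a) := min_le_left _ _
                           _ = (1 - πs c a) * qa := mul_comm _ _
  have hεb : ε / qb ≤ πs c b := by
    rw [div_le_iff₀ hqb]; calc ε ≤ qb * πs c b := min_le_right _ _
                           _ = πs c b * qb := mul_comm _ _
  set π₁ := pert πs c a (ε / qa) with hπ₁
  set π₂ := pert π₁ c b (-(ε / qb)) with hπ₂
  have hadm₁ : Admissible Y π₁ := by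
    refine adm_pert hπs ?_ ?_
    · have := (hπs c a ha).1; positivity
    · linarith
  have h1b : π₁ c b = πs c b := pert_ne πs _ (by simp [hab.ne])
  have hadm₂ : Admissible Y π₂ := by
    refine adm_pert hadm₁ ?_ ?_ <;> rw [h1b]
    · linarith
    · have h1 := (hπs c b hb).2
      have : 0 < ε / qb := by positivity
      linarith
  have hqa0 : qa * (ε / qa) = ε := by field_simp
  have hqb0 : qb * (ε / qb) = ε := by field_simp
  have hsel : ∀ c', selRate Y p π₂ c' = selRate Y p πs c' := by
    intro c'
    rw [hπ₂, selRate_pert _ _ _ _ hb, hπ₁, selRate_pert _ _ _ _ ha]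
    by_cases hc : c' = c
    · subst hc; simp [mul_neg, hqa0, hqb0]
      rw [show pCond Y p c' a * (ε / qa) = ε from hqa0,
        show pCond Y p c' b * (ε / qb) = ε from hqb0]; ring
    · simp [hc]
  have hparen : selRate Y p π₂ true = selRate Y p π₂ false := by
    rw [hsel, hsel, hpar]
  have hut : util Y p π₂ = util Y p πs + (pG Y p c * a - pG Y p c * b) * ε := by
    rw [hπ₂, util_pert _ _ _ hb, hπ₁, util_pert _ _ _ ha,
      p_eq hp c a, p_eq hp c b]
    field_simp
    ring
  have := hπsopt π₂ hadm₂ hparen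
  nlinarith [mul_pos (sub_pos.mpr hgain) hε0]

end Exchange
variable {πs : Bool → ℝ → ℝ}

lemma mem_TS_true {y : ℝ} :
    (y, true) ∈ TS Y p πs ↔ y ∈ Y ∧ 0 < y ∧ 0 < pCond Y p true y ∧ πs true y < 1 := by
  simp [TS, Finset.mem_filter, Finset.mem_product]

lemma mem_TS_false {y : ℝ} :
    (y, false) ∈ TS Y p πs ↔ y ∈ Y ∧ y < 0 ∧ 0 < pCond Y p false y ∧ 0 < πs false y := by
  simp [TS, Finset.mem_filter, Finset.mem_product]

lemma selRate_split (π : Bool → ℝ → ℝ) (c : Bool) :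
    selRate Y p π c = (∑ y ∈ Y.filter (fun y => 0 < y), pCond Y p c y * π c y)
      + ∑ y ∈ Y.filter (fun y => ¬ 0 < y), pCond Y p c y * π c y :=
  (Finset.sum_filter_add_sum_filter_not Y _ _).symm

lemma pos_part_le (hp : IsPMF Y p) {π : Bool → ℝ → ℝ} (hπ : Admissible Y π) (c : Bool) :
    ∑ y ∈ Y.filter (fun y => 0 < y), pCond Y p c y * π c y ≤ posRate Y p c := by
  refine Finset.sum_le_sum fun y hy => ?_
  have hy' := Finset.mem_of_mem_filter y hy
  exact mul_le_of_le_one_right (pCond_nonneg hp hy') ((hπ c y hy').2)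

lemma neg_part_nonneg (hp : IsPMF Y p) {π : Bool → ℝ → ℝ} (hπ : Admissible Y π) (c : Bool) :
    0 ≤ ∑ y ∈ Y.filter (fun y => ¬ 0 < y), pCond Y p c y * π c y := by
  refine Finset.sum_nonneg fun y hy => ?_
  have hy' := Finset.mem_of_mem_filter y hy
  exact mul_nonneg (pCond_nonneg hp hy') (hπ c y hy').1

/-- extract a negatively-qualified selected witness in group `c` -/
lemma neg_witness (hp : IsPMF Y p) {π : Bool → ℝ → ℝ} (hπ : Admissible Y π) (c : Bool)
    (hpos : 0 < ∑ y ∈ Y.filter (fun y => ¬ 0 < y), pCond Y p c y * π c y) :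
    ∃ y₂ ∈ Y, y₂ < 0 ∧ 0 < pCond Y p c y₂ ∧ 0 < π c y₂ := by
  have : ∃ y ∈ Y.filter (fun y => ¬ 0 < y), 0 < pCond Y p c y * π c y := by
    by_contra hc
    refine absurd (Finset.sum_nonpos fun y hy => ?_) (not_le.mpr hpos)
    by_contra h
    exact hc ⟨y, hy, not_le.mp h⟩
  obtain ⟨y₂, hy₂mem, hy₂pos⟩ := this
  have hy₂Y := Finset.mem_of_mem_filter y₂ hy₂mem
  have hy₂le : ¬ 0 < y₂ := (Finset.mem_filter.mp hy₂mem).2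
  have hy₂neg : y₂ < 0 := lt_of_le_of_ne (not_lt.mp hy₂le) (hp.1 y₂ hy₂Y)
  rcases mul_pos_iff.mp hy₂pos with ⟨h1, h2⟩ | ⟨h1, h2⟩
  · exact ⟨y₂, hy₂Y, hy₂neg, h1, h2⟩
  · exact absurd h1 (not_lt.mpr (pCond_nonneg hp hy₂Y))

lemma full_pos_sum (hp : IsPMF Y p) {π : Bool → ℝ → ℝ} (c : Bool)
    (hall : ∀ y ∈ Y, 0 < y → 0 < pCond Y p c y → π c y = 1) :
    ∑ y ∈ Y.filter (fun y => 0 < y), pCond Y p c y * π c y = posRate Y p c := by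
  refine Finset.sum_congr rfl fun y hy => ?_
  have hy' := Finset.mem_of_mem_filter y hy
  have hypos := (Finset.mem_filter.mp hy).2
  rcases (pCond_nonneg hp (c := c) hy').eq_or_lt with h | h
  · rw [← h]; ring
  · rw [hall y hy' hypos h, mul_one]

lemma fact1 (hp : IsPMF Y p) (hπs : Admissible Y πs)
    (hpar : selRate Y p πs true = selRate Y p πs false)
    (hπsopt : ∀ π', Admissible Y π' → selRate Y p π' true = selRate Y p π' false →
      util Y p π' ≤ util Y p πs)
    (hUM : 0 < dUM Y p)
    {y₀ : ℝ} (hy₀ : y₀ ∈ Y) (hneg : y₀ < 0) (hq : 0 < pCond Y p true y₀) :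
    πs true y₀ = 0 := by
  by_contra h0'
  have h0 : 0 < πs true y₀ := lt_of_le_of_ne (hπs true y₀ hy₀).1 (Ne.symm h0')
  by_cases hex : ∃ y₁ ∈ Y, 0 < y₁ ∧ 0 < pCond Y p true y₁ ∧ πs true y₁ < 1
  · obtain ⟨y₁, hy₁, hy₁pos, hq₁, hs₁⟩ := hex
    refine P3 hp hπs hpar hπsopt true hy₁ hy₀ hq₁ hq hs₁ h0 ?_ |>.elim
    nlinarith [pG_pos hp true]
  · push_neg at hex
    have hall : ∀ y ∈ Y, 0 < y → 0 < pCond Y p true y → πs true y = 1 := fun y hy h1 h2 =>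
      le_antisymm (hπs true y hy).2 (hex y hy h1 h2)
    have hSA : posRate Y p true < selRate Y p πs true := by
      rw [selRate_split πs true, full_pos_sum hp true hall]
      have hterm : pCond Y p true y₀ * πs true y₀
          ≤ ∑ y ∈ Y.filter (fun y => ¬ 0 < y), pCond Y p true y * πs true y := by
        refine Finset.single_le_sum (f := fun y => pCond Y p true y * πs true y)
          (fun y hy => ?_) ?_
        · have hy' := Finset.mem_of_mem_filter y hy
          exact mul_nonneg (pCond_nonneg hp hy') (hπs true y hy').1
        · exact Finset.mem_filter.mpr ⟨hy₀, not_lt.mpr hneg.le⟩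
      nlinarith [mul_pos hq h0]
    have hUM' : posRate Y p false < posRate Y p true := by
      have : dUM Y p = posRate Y p true - posRate Y p false := rfl
      linarith
    have hnegsum : 0 < ∑ y ∈ Y.filter (fun y => ¬ 0 < y), pCond Y p false y * πs false y := by
      have h1 := selRate_split (Y := Y) (p := p) πs false
      have h2 := pos_part_le hp hπs false
      have h3 : selRate Y p πs false = selRate Y p πs true := hpar.symm
      linarith
    obtain ⟨y₂, hy₂Y, hy₂neg, hq₂, hs₂⟩ := neg_witness hp hπs false hnegsum
    refine P2 hp hπs hpar hπsopt hy₀ hy₂Y hq hq₂ h0 hs₂ ?_ |>.elim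
    nlinarith [pG_pos hp true, pG_pos hp false]

lemma fact2 (hp : IsPMF Y p) (hπs : Admissible Y πs)
    (hpar : selRate Y p πs true = selRate Y p πs false)
    (hπsopt : ∀ π', Admissible Y π' → selRate Y p π' true = selRate Y p π' false →
      util Y p π' ≤ util Y p πs)
    (hUM : 0 < dUM Y p)
    {y₀ : ℝ} (hy₀ : y₀ ∈ Y) (hpos : 0 < y₀) (hq : 0 < pCond Y p false y₀) :
    πs false y₀ = 1 := by
  by_contra h1'
  have h1 : πs false y₀ < 1 := lt_of_le_of_ne (hπs false y₀ hy₀).2 h1'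
  by_cases hex : ∃ y₁ ∈ Y, 0 < y₁ ∧ 0 < pCond Y p true y₁ ∧ πs true y₁ < 1
  · obtain ⟨y₁, hy₁, hy₁pos, hq₁, hs₁⟩ := hex
    refine P1 hp hπs hpar hπsopt hy₁ hy₀ hq₁ hq hs₁ h1 ?_ |>.elim
    nlinarith [pG_pos hp true, pG_pos hp false]
  · push_neg at hex
    have hall : ∀ y ∈ Y, 0 < y → 0 < pCond Y p true y → πs true y = 1 := fun y hy hh1 hh2 =>
      le_antisymm (hπs true y hy).2 (hex y hy hh1 hh2)
    have hSA : posRate Y p true ≤ selRate Y p πs true := by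
      rw [selRate_split πs true, full_pos_sum hp true hall]
      have := neg_part_nonneg hp hπs true
      linarith
    have hUM' : posRate Y p false < posRate Y p true := by
      have : dUM Y p = posRate Y p true - posRate Y p false := rfl
      linarith
    have hgap : ∑ y ∈ Y.filter (fun y => 0 < y), pCond Y p false y * πs false y
        ≤ posRate Y p false - pCond Y p false y₀ * (1 - πs false y₀) := by
      have hterm : pCond Y p false y₀ - pCond Y p false y₀ * πs false y₀
          ≤ ∑ y ∈ Y.filter (fun y => 0 < y),
              (pCond Y p false y - pCond Y p false y * πs false y) := by
        refine Finset.single_le_sum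
          (f := fun y => pCond Y p false y - pCond Y p false y * πs false y)
          (fun y hy => ?_) ?_
        · have hy' := Finset.mem_of_mem_filter y hy
          have := (hπs false y hy').2
          have := pCond_nonneg hp (c := false) hy'
          nlinarith
        · exact Finset.mem_filter.mpr ⟨hy₀, hpos⟩
      rw [Finset.sum_sub_distrib] at hterm
      have : (∑ y ∈ Y.filter (fun y => 0 < y), pCond Y p false y) = posRate Y p false := rfl
      nlinarith
    have hnegsum : 0 < ∑ y ∈ Y.filter (fun y => ¬ 0 < y), pCond Y p false y * πs false y := by
      have hsplit := selRate_split (Y := Y) (p := p) πs false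
      have h3 : selRate Y p πs false = selRate Y p πs true := hpar.symm
      nlinarith [mul_pos hq (by linarith : (0:ℝ) < 1 - πs false y₀)]
    obtain ⟨y₂, hy₂Y, hy₂neg, hq₂, hs₂⟩ := neg_witness hp hπs false hnegsum
    refine P3 hp hπs hpar hπsopt false hy₀ hy₂Y hq hq₂ h1 hs₂ ?_ |>.elim
    nlinarith [pG_pos hp false]
/-- the threshold `β_s` -/
def betaS (Y : Finset ℝ) (p πs : Bool → ℝ → ℝ) : ℝ :=
  sSup {x : ℝ | ∃ yc ∈ TS Y p πs, x = pG Y p yc.2 * |yc.1|}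

lemma betaSet_eq :
    {x : ℝ | ∃ yc ∈ TS Y p πs, x = pG Y p yc.2 * |yc.1|}
      = ↑((TS Y p πs).image (fun yc => pG Y p yc.2 * |yc.1|)) := by
  ext x
  simp [eq_comm]

lemma betaSet_bdd : BddAbove {x : ℝ | ∃ yc ∈ TS Y p πs, x = pG Y p yc.2 * |yc.1|} := by
  rw [betaSet_eq]
  exact Finset.bddAbove _

lemma beta_mem_le {yc : ℝ × Bool} (hyc : yc ∈ TS Y p πs) :
    pG Y p yc.2 * |yc.1| ≤ betaS Y p πs :=
  le_csSup betaSet_bdd ⟨yc, hyc, rfl⟩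

lemma beta_nonneg (hp : IsPMF Y p) : 0 ≤ betaS Y p πs := by
  apply Real.sSup_nonneg
  rintro x ⟨⟨y', c'⟩, _, rfl⟩
  exact mul_nonneg (pG_pos hp c').le (abs_nonneg _)

lemma K1 (hp : IsPMF Y p) (hπs : Admissible Y πs)
    (hpar : selRate Y p πs true = selRate Y p πs false)
    (hπsopt : ∀ π', Admissible Y π' → selRate Y p π' true = selRate Y p π' false →
      util Y p π' ≤ util Y p πs)
    {y : ℝ} (hy : y ∈ Y) (hypos : 0 < y) (hq : 0 < pCond Y p true y)
    (hs : 0 < πs true y) :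
    betaS Y p πs ≤ pG Y p true * y := by
  refine Real.sSup_le ?_ (mul_nonneg (pG_pos hp true).le hypos.le)
  rintro x ⟨⟨y', c'⟩, hyc, rfl⟩
  cases c'
  · rw [mem_TS_false] at hyc
    obtain ⟨hy', hy'neg, hq', hs'⟩ := hyc
    show pG Y p false * |y'| ≤ pG Y p true * y
    by_contra hlt
    push_neg at hlt
    refine P2 hp hπs hpar hπsopt hy hy' hq hq' hs hs' ?_
    rw [abs_of_neg hy'neg] at hlt
    linarith
  · rw [mem_TS_true] at hyc
    obtain ⟨hy', hy'pos, hq', hs'⟩ := hyc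
    show pG Y p true * |y'| ≤ pG Y p true * y
    by_contra hlt
    push_neg at hlt
    rw [abs_of_pos hy'pos] at hlt
    exact P3 hp hπs hpar hπsopt true hy' hy hq' hq hs' hs hlt

lemma K2 (hp : IsPMF Y p) (hπs : Admissible Y πs)
    (hpar : selRate Y p πs true = selRate Y p πs false)
    (hπsopt : ∀ π', Admissible Y π' → selRate Y p π' true = selRate Y p π' false →
      util Y p π' ≤ util Y p πs)
    {y : ℝ} (hy : y ∈ Y) (hyneg : y < 0) (hq : 0 < pCond Y p false y)
    (hs : πs false y < 1) :
    betaS Y p πs ≤ -(pG Y p false * y) := by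
  refine Real.sSup_le ?_ (by nlinarith [pG_pos hp false])
  rintro x ⟨⟨y', c'⟩, hyc, rfl⟩
  cases c'
  · rw [mem_TS_false] at hyc
    obtain ⟨hy', hy'neg, hq', hs'⟩ := hyc
    show pG Y p false * |y'| ≤ -(pG Y p false * y)
    by_contra hlt
    push_neg at hlt
    rw [abs_of_neg hy'neg] at hlt
    refine P3 hp hπs hpar hπsopt false hy hy' hq hq' hs hs' ?_
    linarith
  · rw [mem_TS_true] at hyc
    obtain ⟨hy', hy'pos, hq', hs'⟩ := hyc
    show pG Y p true * |y'| ≤ -(pG Y p false * y)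
    by_contra hlt
    push_neg at hlt
    rw [abs_of_pos hy'pos] at hlt
    refine P1 hp hπs hpar hπsopt hy' hy hq' hq hs' hs ?_
    linarith
lemma key_expand (hp : IsPMF Y p) (β : ℝ) (π' : Bool → ℝ → ℝ) :
    util Y p π' - β * (selRate Y p π' true - selRate Y p π' false)
      = ∑ y ∈ Y, ((p true y * y - β * pCond Y p true y) * π' true y
          + (p false y * y + β * pCond Y p false y) * π' false y) := by
  simp only [util, selRate, Fintype.sum_bool, sub_mul, add_mul,
    Finset.sum_sub_distrib, Finset.sum_add_distrib, mul_sub, Finset.mul_sum, mul_assoc]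
  ring

lemma main_ineq (hp : IsPMF Y p) (hπs : Admissible Y πs)
    (hpar : selRate Y p πs true = selRate Y p πs false)
    (hπsopt : ∀ π', Admissible Y π' → selRate Y p π' true = selRate Y p π' false →
      util Y p π' ≤ util Y p πs)
    (hUM : 0 < dUM Y p)
    {π : Bool → ℝ → ℝ} (hπ : Admissible Y π) :
    util Y p π ≤ util Y p πs
      + betaS Y p πs * (selRate Y p π true - selRate Y p π false) := by
  set β := betaS Y p πs with hβ
  have hβ0 : 0 ≤ β := beta_nonneg hp
  have hterm : ∀ y ∈ Y,
      (p true y * y - β * pCond Y p true y) * π true y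
        + (p false y * y + β * pCond Y p false y) * π false y
      ≤ (p true y * y - β * pCond Y p true y) * πs true y
        + (p false y * y + β * pCond Y p false y) * πs false y := by
    intro y hy
    have hy0 : y ≠ 0 := hp.1 y hy
    have hA : (p true y * y - β * pCond Y p true y) * π true y
        ≤ (p true y * y - β * pCond Y p true y) * πs true y := by
      rcases (pCond_nonneg hp (c := true) hy).eq_or_lt with hq | hq
      · have hp0 : p true y = 0 := by rw [p_eq hp true y, ← hq, mul_zero]
        rw [hp0, ← hq]
        ring_nf
        exact le_refl _
      · have hcoef : p true y * y - β * pCond Y p true y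
            = pCond Y p true y * (pG Y p true * y - β) := by
          rw [p_eq hp true y]; ring
        rcases hy0.lt_or_gt with hyneg | hypos
        · have hs0 : πs true y = 0 :=
            fact1 hp hπs hpar hπsopt hUM hy hyneg hq
          rw [hcoef, hs0, mul_zero]
          have h1 : pCond Y p true y * (pG Y p true * y - β) ≤ 0 :=
            mul_nonpos_iff.mpr (Or.inl ⟨hq.le, by nlinarith [pG_pos hp true]⟩)
          exact mul_nonpos_iff.mpr (Or.inr ⟨h1, (hπ true y hy).1⟩)
        · rcases lt_trichotomy (pG Y p true * y) β with hc | hc | hc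
          · have hs0 : πs true y = 0 := by
              by_contra hne
              have hspos : 0 < πs true y :=
                lt_of_le_of_ne (hπs true y hy).1 (Ne.symm hne)
              exact absurd (K1 hp hπs hpar hπsopt hy hypos hq hspos) (not_le.mpr hc)
            rw [hcoef, hs0, mul_zero]
            have h1 : pCond Y p true y * (pG Y p true * y - β) ≤ 0 :=
              mul_nonpos_iff.mpr (Or.inl ⟨hq.le, by linarith⟩)
            exact mul_nonpos_iff.mpr (Or.inr ⟨h1, (hπ true y hy).1⟩)
          · rw [hcoef, hc]
            simp
          · have hs1 : πs true y = 1 := by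
              by_contra hne
              have hslt : πs true y < 1 :=
                lt_of_le_of_ne (hπs true y hy).2 hne
              have hmem : (y, true) ∈ TS Y p πs :=
                mem_TS_true.mpr ⟨hy, hypos, hq, hslt⟩
              have := beta_mem_le (πs := πs) hmem
              rw [abs_of_pos hypos] at this
              exact absurd this (not_le.mpr hc)
            rw [hcoef, hs1, mul_one]
            have h1 : 0 ≤ pCond Y p true y * (pG Y p true * y - β) :=
              mul_nonneg hq.le (by linarith)
            nlinarith [(hπ true y hy).2]
    have hB : (p false y * y + β * pCond Y p false y) * π false y
        ≤ (p false y * y + β * pCond Y p false y) * πs false y := by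
      rcases (pCond_nonneg hp (c := false) hy).eq_or_lt with hq | hq
      · have hp0 : p false y = 0 := by rw [p_eq hp false y, ← hq, mul_zero]
        rw [hp0, ← hq]
        ring_nf
        exact le_refl _
      · have hcoef : p false y * y + β * pCond Y p false y
            = pCond Y p false y * (pG Y p false * y + β) := by
          rw [p_eq hp false y]; ring
        rcases hy0.lt_or_gt with hyneg | hypos
        · rcases lt_trichotomy (pG Y p false * y + β) 0 with hc | hc | hc
          · have hs0 : πs false y = 0 := by
              by_contra hne
              have hspos : 0 < πs false y :=
                lt_of_le_of_ne (hπs false y hy).1 (Ne.symm hne)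
              have hmem : (y, false) ∈ TS Y p πs :=
                mem_TS_false.mpr ⟨hy, hyneg, hq, hspos⟩
              have := beta_mem_le (πs := πs) hmem
              rw [abs_of_neg hyneg] at this
              simp only at this
              linarith
            rw [hcoef, hs0, mul_zero]
            have h1 : pCond Y p false y * (pG Y p false * y + β) ≤ 0 :=
              mul_nonpos_iff.mpr (Or.inl ⟨hq.le, hc.le⟩)
            exact mul_nonpos_iff.mpr (Or.inr ⟨h1, (hπ false y hy).1⟩)
          · rw [hcoef, hc]
            simp
          · have hs1 : πs false y = 1 := by
              by_contra hne
              have hslt : πs false y < 1 :=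
                lt_of_le_of_ne (hπs false y hy).2 hne
              have := K2 hp hπs hpar hπsopt hy hyneg hq hslt
              linarith
            rw [hcoef, hs1, mul_one]
            have h1 : 0 ≤ pCond Y p false y * (pG Y p false * y + β) :=
              mul_nonneg hq.le hc.le
            nlinarith [(hπ false y hy).2]
        · have hs1 : πs false y = 1 :=
            fact2 hp hπs hpar hπsopt hUM hy hypos hq
          rw [hcoef, hs1, mul_one]
          have h1 : 0 ≤ pCond Y p false y * (pG Y p false * y + β) :=
            mul_nonneg hq.le (by nlinarith [pG_pos hp false])
          nlinarith [(hπ false y hy).2]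
    exact add_le_add hA hB
  have hsum := Finset.sum_le_sum hterm
  rw [← key_expand hp β π, ← key_expand hp β πs] at hsum
  rw [hpar] at hsum
  simp only [sub_self, mul_zero, sub_zero] at hsum
  linarith
lemma gR_nonneg {g : ℝ → ℝ} (hg : AdmissiblePenalty g) {gR : ℝ}
    (hgR : Tendsto (fun h : ℝ => (g h - g 0) / h) (𝓝[>] 0) (𝓝 gR)) : 0 ≤ gR := by
  refine ge_of_tendsto hgR ?_
  filter_upwards [self_mem_nhdsWithin] with x hx
  have hx0 : (0:ℝ) < x := hx
  have hmono := hg.2.1 (Set.self_mem_Ici) (le_of_lt hx0 : (0:ℝ) ≤ x) hx0.le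
  exact div_nonneg (by linarith) hx0.le

lemma slope_lb {g : ℝ → ℝ} (hg : AdmissiblePenalty g) {gR : ℝ}
    (hgR : Tendsto (fun h : ℝ => (g h - g 0) / h) (𝓝[>] 0) (𝓝 gR))
    {d : ℝ} (hd : 0 < d) : gR * d ≤ g d := by
  have hlim : gR ≤ (g d - g 0) / d := by
    refine le_of_tendsto hgR ?_
    filter_upwards [Ioo_mem_nhdsGT_of_mem (Set.left_mem_Ico.mpr hd)] with x hx
    have hx0 : (0:ℝ) < x := hx.1
    have := hg.2.2.1.secant_mono (Set.self_mem_Ici)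
      (Set.mem_Ici.mpr hx0.le) (Set.mem_Ici.mpr hd.le) hx0.ne' hd.ne' hx.2.le
    simpa using this
  rw [hg.1, sub_zero] at hlim
  calc gR * d ≤ (g d / d) * d := by nlinarith
    _ = g d := by field_simp
end Stmt6

open Stmt6 in
theorem stmt_6' (Y : Finset ℝ) (p : Bool → ℝ → ℝ) (hp : IsPMF Y p)
    (g : ℝ → ℝ) (hg : AdmissiblePenalty g) (lam : ℝ) (hlam : 0 ≤ lam)
    (hUM : 0 < dUM Y p)
    (πs : Bool → ℝ → ℝ) (hπs : Admissible Y πs)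
    (hpar : selRate Y p πs true = selRate Y p πs false)
    (hπsopt : ∀ π', Admissible Y π' → selRate Y p π' true = selRate Y p π' false →
      util Y p π' ≤ util Y p πs)
    (gR : ℝ)
    (hgR : Tendsto (fun h : ℝ => (g h - g 0) / h) (𝓝[>] 0) (𝓝 gR)) :
    (∃ π, IsOptimal Y p g lam π ∧ disp Y p π = 0) ↔
      sSup {x : ℝ | ∃ yc ∈ TS Y p πs, x = pG Y p yc.2 * |yc.1|} ≤ lam * gR := by
  have hg0 : g 0 = 0 := hg.1
  have hgR0 : 0 ≤ gR := gR_nonneg hg hgR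
  constructor
  · rintro ⟨π, ⟨hadm, hopt⟩, hdisp⟩
    have hparπ : selRate Y p π true = selRate Y p π false :=
      sub_eq_zero.mp (abs_eq_zero.mp hdisp)
    have hUπ : util Y p π ≤ util Y p πs := hπsopt π hadm hparπ
    refine Real.sSup_le ?_ (mul_nonneg hlam hgR0)
    rintro x ⟨⟨y', c'⟩, hyc, rfl⟩
    cases c'
    · -- group B, negative qualification: lower its selection
      rw [mem_TS_false] at hyc
      obtain ⟨hy', hy'neg, hq, hs⟩ := hyc
      show pG Y p false * |y'| ≤ lam * gR
      set q := pCond Y p false y' with hqdef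
      have hq2 : 0 < q * πs false y' := mul_pos hq hs
      have hkey : ∀ t : ℝ, 0 < t → t ≤ q * πs false y' →
          pG Y p false * |y'| * t ≤ lam * g t := by
        intro t ht htle
        set π' := pert πs false y' (-(t / q)) with hπ'def
        have htq : t / q ≤ πs false y' := by
          rw [div_le_iff₀ hq]; calc t ≤ q * πs false y' := htle
            _ = πs false y' * q := mul_comm _ _
        have hadm' : Admissible Y π' := by
          refine adm_pert hπs (by linarith) ?_
          have := (hπs false y' hy').2
          have : 0 < t / q := by positivity
          linarith [(hπs false y' hy').2]
        have hsT : selRate Y p π' true = selRate Y p πs true := by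
          rw [hπ'def, selRate_pert _ _ _ _ hy']; simp
        have hsF : selRate Y p π' false = selRate Y p πs false - t := by
          rw [hπ'def, selRate_pert _ _ _ _ hy']
          have hqq : q * (t / q) = t := by field_simp
          rw [if_pos rfl, ← hqdef, mul_neg, hqq]
          ring
        have hdisp' : disp Y p π' = t := by
          unfold disp
          rw [hsT, hsF, hpar]
          rw [show selRate Y p πs false - (selRate Y p πs false - t) = t by ring]
          exact abs_of_pos ht
        have hu : util Y p π' = util Y p πs + pG Y p false * |y'| * t := by
          rw [hπ'def, util_pert _ _ _ hy', p_eq hp false y', abs_of_neg hy'neg, ← hqdef]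
          field_simp
        have h1 := hopt π' hadm'
        unfold obj at h1
        rw [hdisp', hdisp, hg0, mul_zero, sub_zero, hu] at h1
        linarith
      refine ge_of_tendsto (hgR.const_mul lam) ?_
      filter_upwards [Ioo_mem_nhdsGT_of_mem (Set.left_mem_Ico.mpr hq2)] with t ht
      have h2 := hkey t ht.1 ht.2.le
      have h3 : pG Y p false * |y'| ≤ lam * g t / t := by
        rw [le_div_iff₀ ht.1]; linarith
      rw [hg0, sub_zero, ← mul_div_assoc]
      exact h3

    · -- group A, positive qualification: raise its selection
      rw [mem_TS_true] at hyc
      obtain ⟨hy', hy'pos, hq, hs⟩ := hyc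
      show pG Y p true * |y'| ≤ lam * gR
      set q := pCond Y p true y' with hqdef
      have hq2 : 0 < q * (1 - πs true y') := mul_pos hq (by linarith)
      have hkey : ∀ t : ℝ, 0 < t → t ≤ q * (1 - πs true y') →
          pG Y p true * |y'| * t ≤ lam * g t := by
        intro t ht htle
        set π' := pert πs true y' (t / q) with hπ'def
        have htq : t / q ≤ 1 - πs true y' := by
          rw [div_le_iff₀ hq]; calc t ≤ q * (1 - πs true y') := htle
            _ = (1 - πs true y') * q := mul_comm _ _
        have hadm' : Admissible Y π' := by
          refine adm_pert hπs ?_ (by linarith)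
          have := (hπs true y' hy').1
          have : 0 < t / q := by positivity
          linarith [(hπs true y' hy').1]
        have hsF : selRate Y p π' false = selRate Y p πs false := by
          rw [hπ'def, selRate_pert _ _ _ _ hy']; simp
        have hsT : selRate Y p π' true = selRate Y p πs true + t := by
          rw [hπ'def, selRate_pert _ _ _ _ hy']
          have hqq : q * (t / q) = t := by field_simp
          rw [if_pos rfl, ← hqdef, hqq]
        have hdisp' : disp Y p π' = t := by
          unfold disp
          rw [hsT, hsF, hpar]
          rw [show selRate Y p πs false + t - selRate Y p πs false = t by ring]
          exact abs_of_pos ht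
        have hu : util Y p π' = util Y p πs + pG Y p true * |y'| * t := by
          rw [hπ'def, util_pert _ _ _ hy', p_eq hp true y', abs_of_pos hy'pos, ← hqdef]
          field_simp
        have h1 := hopt π' hadm'
        unfold obj at h1
        rw [hdisp', hdisp, hg0, mul_zero, sub_zero, hu] at h1
        linarith
      refine ge_of_tendsto (hgR.const_mul lam) ?_
      filter_upwards [Ioo_mem_nhdsGT_of_mem (Set.left_mem_Ico.mpr hq2)] with t ht
      have h2 := hkey t ht.1 ht.2.le
      have h3 : pG Y p true * |y'| ≤ lam * g t / t := by
        rw [le_div_iff₀ ht.1]; linarith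
      rw [hg0, sub_zero, ← mul_div_assoc]
      exact h3
  · intro hle
    have hle' : betaS Y p πs ≤ lam * gR := hle
    have hβ0 : 0 ≤ betaS Y p πs := beta_nonneg hp
    have hdisps : disp Y p πs = 0 := by
      unfold disp; rw [hpar, sub_self, abs_zero]
    have hobjs : obj Y p g lam πs = util Y p πs := by
      unfold obj; rw [hdisps, hg0, mul_zero, sub_zero]
    refine ⟨πs, ⟨hπs, ?_⟩, hdisps⟩
    intro π' hadm'
    have hui := main_ineq hp hπs hpar hπsopt hUM hadm'
    have hst : selRate Y p π' true - selRate Y p π' false ≤ disp Y p π' := le_abs_self _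
    have hβd : betaS Y p πs * (selRate Y p π' true - selRate Y p π' false)
        ≤ betaS Y p πs * disp Y p π' := mul_le_mul_of_nonneg_left hst hβ0
    rcases (abs_nonneg (selRate Y p π' true - selRate Y p π' false)).eq_or_lt with hd | hd
    · have hd' : disp Y p π' = 0 := hd.symm
      rw [hobjs]
      unfold obj
      rw [hd', hg0, mul_zero, sub_zero]
      exact hπsopt π' hadm' (sub_eq_zero.mp (abs_eq_zero.mp hd.symm))
    · have hd' : 0 < disp Y p π' := hd
      have hslope : gR * disp Y p π' ≤ g (disp Y p π') := slope_lb hg hgR hd'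
      have h1 : lam * (gR * disp Y p π') ≤ lam * g (disp Y p π') :=
        mul_le_mul_of_nonneg_left hslope hlam
      have h2 : betaS Y p πs * disp Y p π' ≤ lam * gR * disp Y p π' :=
        mul_le_mul_of_nonneg_right hle' hd'.le
      rw [hobjs]
      unfold obj
      have h3 : lam * gR * disp Y p π' = lam * (gR * disp Y p π') := mul_assoc _ _ _
      linarith


/-- Full-satisfaction criterion. Assume `Δ_UM > 0`. The penalty
`(g, λ)` is fully satisfactory (some optimal policy has `Δ(π) = 0`) iff
`β_s ≤ λ·g'₊(0)`, where `β_s = max_{(y,c) ∈ 𝒯_s} p(c)·|y|` is computed from any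
maximizer `πs` of the utility among demographic-parity policies. -/
theorem stmt_6 (Y : Finset ℝ) (p : Bool → ℝ → ℝ) (hp : IsPMF Y p)
    (g : ℝ → ℝ) (hg : AdmissiblePenalty g) (lam : ℝ) (hlam : 0 ≤ lam)
    (hUM : 0 < dUM Y p)
    (πs : Bool → ℝ → ℝ) (hπs : Admissible Y πs)
    (hpar : selRate Y p πs true = selRate Y p πs false)
    (hπsopt : ∀ π', Admissible Y π' → selRate Y p π' true = selRate Y p π' false →
      util Y p π' ≤ util Y p πs)
    (gR : ℝ)
    (hgR : Tendsto (fun h : ℝ => (g h - g 0) / h) (𝓝[>] 0) (𝓝 gR)) :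
    (∃ π, IsOptimal Y p g lam π ∧ disp Y p π = 0) ↔
      sSup {x : ℝ | ∃ yc ∈ TS Y p πs, x = pG Y p yc.2 * |yc.1|} ≤ lam * gR := by
  exact stmt_6' Y p hp g hg lam hlam hUM πs hπs hpar hπsopt gR hgR
end
end

section
/- (Reformulation of the penalized problem.) Assume Δ_UM > 0. Then max over policies π of J(π) = U(π) − λ·g(Δ(π)) equals the maximum, over real variables z_{yc} for (y,c) ∈ 𝒯_e satisfying 0 ≤ z_{yc} ≤ p(y|c) and ∑_{(y,c) ∈ 𝒯_e} z_{yc} ≤ Δ_UM, of E[Y_+] − ∑_{(y,c) ∈ 𝒯_e} z_{yc}·p(c)·|y| − λ·g(Δ_UM − ∑_{(y,c) ∈ 𝒯_e} z_{yc}), where E[Y_+] = ∑_{c, y>0} p(c,y)·y and 𝒯_e = {(y,A) : y > 0, p(y|A) > 0} ∪ {(y,B) : y < 0, p(y|B) > 0}. -/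
/-!
Static setting: `Y` is a finite set of nonzero real qualifications; the two groups
`A`/`B` are encoded as `true`/`false`; `p c y` is the joint pmf on group × qualification.
-/

open Finset Filter Topology
open scoped Classical

noncomputable section

namespace Stmt7

lemma mem_TE_true (Y : Finset ℝ) (p : Bool → ℝ → ℝ) (y : ℝ) :
    (y, true) ∈ TE Y p ↔ y ∈ Y ∧ 0 < y ∧ 0 < pCond Y p true y := by
  simp [TE]

lemma mem_TE_false (Y : Finset ℝ) (p : Bool → ℝ → ℝ) (y : ℝ) :
    (y, false) ∈ TE Y p ↔ y ∈ Y ∧ y < 0 ∧ 0 < pCond Y p false y := by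
  simp [TE]

lemma sum_TE_split (Y : Finset ℝ) (p : Bool → ℝ → ℝ) (f : ℝ × Bool → ℝ) :
    ∑ yc ∈ TE Y p, f yc
      = (∑ y ∈ Y, if (y, true) ∈ TE Y p then f (y, true) else 0)
        + ∑ y ∈ Y, if (y, false) ∈ TE Y p then f (y, false) else 0 := by
  have h1 : TE Y p = (Y ×ˢ (Finset.univ : Finset Bool)).filter (fun yc => yc ∈ TE Y p) := by
    rw [Finset.filter_mem_eq_inter]
    exact (Finset.inter_eq_right.mpr (Finset.filter_subset _ _)).symm
  conv_lhs => rw [h1]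
  rw [Finset.sum_filter, Finset.sum_product]
  simp only [Fintype.sum_bool]
  rw [Finset.sum_add_distrib]

lemma pCond_nonneg (Y : Finset ℝ) (p : Bool → ℝ → ℝ) (hp : IsPMF Y p) (c : Bool)
    {y : ℝ} (hy : y ∈ Y) : 0 ≤ pCond Y p c y :=
  div_nonneg (hp.2.1 c y hy) (hp.2.2.2 c).le

lemma pCond_mul_pG (Y : Finset ℝ) (p : Bool → ℝ → ℝ) (hp : IsPMF Y p) (c : Bool) (y : ℝ) :
    pCond Y p c y * pG Y p c = p c y :=
  div_mul_cancel₀ _ (hp.2.2.2 c).ne'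

lemma p_of_pCond_zero (Y : Finset ℝ) (p : Bool → ℝ → ℝ) (hp : IsPMF Y p) {c : Bool} {y : ℝ}
    (h : pCond Y p c y = 0) : p c y = 0 := by
  rw [← pCond_mul_pG Y p hp c y, h, zero_mul]

/-- The policy constructed from a feasible `z`. -/
def pol (Y : Finset ℝ) (p : Bool → ℝ → ℝ) (z : ℝ × Bool → ℝ) : Bool → ℝ → ℝ := fun c y =>
  if (y, c) ∈ TE Y p then
    (if c = true then 1 - z (y, c) / pCond Y p c y else z (y, c) / pCond Y p c y)
  else if 0 < y then 1 else 0

lemma achieve (Y : Finset ℝ) (p : Bool → ℝ → ℝ) (hp : IsPMF Y p) (g : ℝ → ℝ) (lam : ℝ)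
    (z : ℝ × Bool → ℝ)
    (hz1 : ∀ yc ∈ TE Y p, 0 ≤ z yc ∧ z yc ≤ pCond Y p yc.2 yc.1)
    (hz2 : (∑ yc ∈ TE Y p, z yc) ≤ dUM Y p) :
    Admissible Y (pol Y p z) ∧
      obj Y p g lam (pol Y p z)
        = eyPos Y p - (∑ yc ∈ TE Y p, z yc * (pG Y p yc.2 * |yc.1|)) -
            lam * g (dUM Y p - ∑ yc ∈ TE Y p, z yc) := by
  classical
  have hpnn := hp.2.1
  have hpG := hp.2.2.2
  have hadm : Admissible Y (pol Y p z) := by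
    intro c y hy
    by_cases hTE : (y, c) ∈ TE Y p
    · have hpc : 0 < pCond Y p c y := by
        cases c
        · exact ((mem_TE_false Y p y).mp hTE).2.2
        · exact ((mem_TE_true Y p y).mp hTE).2.2
      have hz := hz1 _ hTE
      have h1 : 0 ≤ z (y, c) / pCond Y p c y := div_nonneg hz.1 hpc.le
      have h2 : z (y, c) / pCond Y p c y ≤ 1 := by
        rw [div_le_one hpc]; exact hz.2
      cases c <;> simp only [pol, hTE, if_true] <;> norm_num <;> constructor <;> linarith
    · cases c <;> simp only [pol, hTE, if_false] <;> split <;> norm_num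
  refine ⟨hadm, ?_⟩
  have key_sel_true : ∀ y ∈ Y, pCond Y p true y * pol Y p z true y
      = (if 0 < y then pCond Y p true y else 0)
        - (if (y, true) ∈ TE Y p then z (y, true) else 0) := by
    intro y hy
    by_cases hTE : (y, true) ∈ TE Y p
    · obtain ⟨-, hy0, hpc⟩ := (mem_TE_true Y p y).mp hTE
      have hne := hpc.ne'
      simp only [pol, hTE, if_true, if_pos hy0]
      field_simp
    · simp only [pol, hTE, if_false]
      by_cases hy0 : 0 < y
      · have hpc0 : pCond Y p true y = 0 := by
          rcases (pCond_nonneg Y p hp true hy).lt_or_eq with h | h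
          · exact absurd ((mem_TE_true Y p y).mpr ⟨hy, hy0, h⟩) hTE
          · exact h.symm
        simp [hy0, hpc0]
      · simp [hy0]
  have key_sel_false : ∀ y ∈ Y, pCond Y p false y * pol Y p z false y
      = (if 0 < y then pCond Y p false y else 0)
        + (if (y, false) ∈ TE Y p then z (y, false) else 0) := by
    intro y hy
    by_cases hTE : (y, false) ∈ TE Y p
    · obtain ⟨-, hy0, hpc⟩ := (mem_TE_false Y p y).mp hTE
      have hne := hpc.ne'
      have hny : ¬ (0 < y) := by linarith
      simp only [pol, hTE, if_true, if_neg hny, Bool.false_eq_true, if_false, zero_add]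
      field_simp
    · simp only [pol, hTE, if_false]
      by_cases hy0 : 0 < y
      · simp [hy0]
      · have hyneg : y < 0 := lt_of_le_of_ne (not_lt.mp hy0) (hp.1 y hy)
        have hpc0 : pCond Y p false y = 0 := by
          rcases (pCond_nonneg Y p hp false hy).lt_or_eq with h | h
          · exact absurd ((mem_TE_false Y p y).mpr ⟨hy, hyneg, h⟩) hTE
          · exact h.symm
        simp [hy0, hpc0]
  have key_util_true : ∀ y ∈ Y, p true y * y * pol Y p z true y
      = (if 0 < y then p true y * y else 0)
        - (if (y, true) ∈ TE Y p then z (y, true) * (pG Y p true * |y|) else 0) := by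
    intro y hy
    by_cases hTE : (y, true) ∈ TE Y p
    · obtain ⟨-, hy0, hpc⟩ := (mem_TE_true Y p y).mp hTE
      have hne := hpc.ne'
      have hpe := pCond_mul_pG Y p hp true y
      simp only [pol, hTE, if_true, if_pos hy0, abs_of_pos hy0]
      rw [← hpe]
      field_simp
    · simp only [pol, hTE, if_false]
      by_cases hy0 : 0 < y
      · have hpc0 : pCond Y p true y = 0 := by
          rcases (pCond_nonneg Y p hp true hy).lt_or_eq with h | h
          · exact absurd ((mem_TE_true Y p y).mpr ⟨hy, hy0, h⟩) hTE
          · exact h.symm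
        have hp0 : p true y = 0 := p_of_pCond_zero Y p hp hpc0
        simp [hy0, hp0]
      · simp [hy0]
  have key_util_false : ∀ y ∈ Y, p false y * y * pol Y p z false y
      = (if 0 < y then p false y * y else 0)
        - (if (y, false) ∈ TE Y p then z (y, false) * (pG Y p false * |y|) else 0) := by
    intro y hy
    by_cases hTE : (y, false) ∈ TE Y p
    · obtain ⟨-, hy0, hpc⟩ := (mem_TE_false Y p y).mp hTE
      have hne := hpc.ne'
      have hpe := pCond_mul_pG Y p hp false y
      have hny : ¬ (0 < y) := by linarith
      simp only [pol, hTE, if_true, if_neg hny, abs_of_neg hy0, Bool.false_eq_true, if_false]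
      rw [← hpe]
      field_simp
      ring
    · simp only [pol, hTE, if_false]
      by_cases hy0 : 0 < y
      · simp [hy0]
      · have hyneg : y < 0 := lt_of_le_of_ne (not_lt.mp hy0) (hp.1 y hy)
        have hpc0 : pCond Y p false y = 0 := by
          rcases (pCond_nonneg Y p hp false hy).lt_or_eq with h | h
          · exact absurd ((mem_TE_false Y p y).mpr ⟨hy, hyneg, h⟩) hTE
          · exact h.symm
        have hp0 : p false y = 0 := p_of_pCond_zero Y p hp hpc0
        simp [hy0, hp0]
  have hS := sum_TE_split Y p (fun yc => z yc)
  have hC := sum_TE_split Y p (fun yc => z yc * (pG Y p yc.2 * |yc.1|))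
  simp only at hS hC
  have hSel_true : selRate Y p (pol Y p z) true
      = posRate Y p true - ∑ y ∈ Y, (if (y, true) ∈ TE Y p then z (y, true) else 0) := by
    rw [selRate, posRate, Finset.sum_filter, ← Finset.sum_sub_distrib]
    exact Finset.sum_congr rfl key_sel_true
  have hSel_false : selRate Y p (pol Y p z) false
      = posRate Y p false + ∑ y ∈ Y, (if (y, false) ∈ TE Y p then z (y, false) else 0) := by
    rw [selRate, posRate, Finset.sum_filter, ← Finset.sum_add_distrib]
    exact Finset.sum_congr rfl key_sel_false
  have hUtil : util Y p (pol Y p z)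
      = eyPos Y p - ∑ yc ∈ TE Y p, z yc * (pG Y p yc.2 * |yc.1|) := by
    have h1 : ∑ y ∈ Y, p true y * y * pol Y p z true y
        = (∑ y ∈ Y, if 0 < y then p true y * y else 0)
          - ∑ y ∈ Y, (if (y, true) ∈ TE Y p then z (y, true) * (pG Y p true * |y|) else 0) := by
      rw [← Finset.sum_sub_distrib]; exact Finset.sum_congr rfl key_util_true
    have h2 : ∑ y ∈ Y, p false y * y * pol Y p z false y
        = (∑ y ∈ Y, if 0 < y then p false y * y else 0)
          - ∑ y ∈ Y, (if (y, false) ∈ TE Y p then z (y, false) * (pG Y p false * |y|) else 0) := by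
      rw [← Finset.sum_sub_distrib]; exact Finset.sum_congr rfl key_util_false
    rw [util, Fintype.sum_bool, h1, h2, eyPos, Fintype.sum_bool, Finset.sum_filter,
      Finset.sum_filter, hC]
    ring
  have hDisp : disp Y p (pol Y p z) = dUM Y p - ∑ yc ∈ TE Y p, z yc := by
    have harg : selRate Y p (pol Y p z) true - selRate Y p (pol Y p z) false
        = dUM Y p - ∑ yc ∈ TE Y p, z yc := by
      rw [hSel_true, hSel_false, dUM, hS]; ring
    rw [disp, harg, abs_of_nonneg (by linarith)]
  rw [obj, hUtil, hDisp]

/-- The witness `z` constructed from a policy. -/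
def wit (Y : Finset ℝ) (p : Bool → ℝ → ℝ) (π : Bool → ℝ → ℝ) : ℝ × Bool → ℝ := fun yc =>
  if yc ∈ TE Y p then
    (if yc.2 = true then pCond Y p true yc.1 * (1 - π true yc.1)
     else pCond Y p false yc.1 * π false yc.1)
  else 0

lemma bound (Y : Finset ℝ) (p : Bool → ℝ → ℝ) (hp : IsPMF Y p) (g : ℝ → ℝ)
    (hg : AdmissiblePenalty g) (lam : ℝ) (hlam : 0 ≤ lam) (hUM : 0 < dUM Y p)
    (π : Bool → ℝ → ℝ) (hπ : Admissible Y π) :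
    ∃ z : ℝ × Bool → ℝ, (∀ yc ∈ TE Y p, 0 ≤ z yc ∧ z yc ≤ pCond Y p yc.2 yc.1) ∧
      (∑ yc ∈ TE Y p, z yc) ≤ dUM Y p ∧
      obj Y p g lam π ≤ eyPos Y p - (∑ yc ∈ TE Y p, z yc * (pG Y p yc.2 * |yc.1|)) -
        lam * g (dUM Y p - ∑ yc ∈ TE Y p, z yc) := by
  classical
  have hpnn := hp.2.1
  have hpG := hp.2.2.2
  set z : ℝ × Bool → ℝ := wit Y p π with hzdef
  have hfeas : ∀ yc ∈ TE Y p, 0 ≤ z yc ∧ z yc ≤ pCond Y p yc.2 yc.1 := by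
    rintro ⟨y, c⟩ hTE
    cases c
    · obtain ⟨hy, -, hpc⟩ := (mem_TE_false Y p y).mp hTE
      have hb := hπ false y hy
      simp only [hzdef, wit, hTE, if_true]
      norm_num
      constructor
      · exact mul_nonneg hpc.le hb.1
      · exact mul_le_of_le_one_right hpc.le hb.2
    · obtain ⟨hy, -, hpc⟩ := (mem_TE_true Y p y).mp hTE
      have hb := hπ true y hy
      simp only [hzdef, wit, hTE, if_true]
      norm_num
      constructor
      · exact mul_nonneg hpc.le (by linarith [hb.2])
      · exact mul_le_of_le_one_right hpc.le (by linarith [hb.1])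
  have hznn : ∀ yc ∈ TE Y p, 0 ≤ z yc := fun yc h => (hfeas yc h).1
  set C : ℝ := ∑ yc ∈ TE Y p, z yc * (pG Y p yc.2 * |yc.1|) with hCdef
  set S : ℝ := ∑ yc ∈ TE Y p, z yc with hSdef
  have hC0 : 0 ≤ C :=
    Finset.sum_nonneg fun yc h =>
      mul_nonneg (hznn yc h) (mul_nonneg (hpG yc.2).le (abs_nonneg _))
  have hS0 : 0 ≤ S := Finset.sum_nonneg hznn
  -- termwise utility bounds
  have t_true : ∀ y ∈ Y, p true y * y * π true y
      ≤ (if 0 < y then p true y * y else 0)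
        - (if (y, true) ∈ TE Y p then z (y, true) * (pG Y p true * |y|) else 0) := by
    intro y hy
    have hb := hπ true y hy
    by_cases hTE : (y, true) ∈ TE Y p
    · obtain ⟨-, hy0, hpc⟩ := (mem_TE_true Y p y).mp hTE
      have hpe := pCond_mul_pG Y p hp true y
      have hzeq : z (y, true) * (pG Y p true * |y|) = p true y * (1 - π true y) * y := by
        simp only [hzdef, wit, hTE, if_true]
        norm_num
        rw [abs_of_pos hy0, ← hpe]
        ring
      rw [if_pos hy0, if_pos hTE, hzeq]
      exact le_of_eq (by ring)
    · rw [if_neg hTE]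
      by_cases hy0 : 0 < y
      · have hpc0 : pCond Y p true y = 0 := by
          rcases (pCond_nonneg Y p hp true hy).lt_or_eq with h | h
          · exact absurd ((mem_TE_true Y p y).mpr ⟨hy, hy0, h⟩) hTE
          · exact h.symm
        have hp0 : p true y = 0 := p_of_pCond_zero Y p hp hpc0
        simp [hy0, hp0]
      · have hyneg : y < 0 := lt_of_le_of_ne (not_lt.mp hy0) (hp.1 y hy)
        rw [if_neg hy0]
        nlinarith [mul_nonneg (mul_nonneg (hpnn true y hy) hb.1) (neg_nonneg.mpr hyneg.le)]
  have t_false : ∀ y ∈ Y, p false y * y * π false y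
      ≤ (if 0 < y then p false y * y else 0)
        - (if (y, false) ∈ TE Y p then z (y, false) * (pG Y p false * |y|) else 0) := by
    intro y hy
    have hb := hπ false y hy
    by_cases hTE : (y, false) ∈ TE Y p
    · obtain ⟨-, hy0, hpc⟩ := (mem_TE_false Y p y).mp hTE
      have hpe := pCond_mul_pG Y p hp false y
      have hny : ¬ (0 < y) := by linarith
      have hzeq : z (y, false) * (pG Y p false * |y|) = - (p false y * y * π false y) := by
        simp only [hzdef, wit, hTE, if_true]
        norm_num
        rw [abs_of_neg hy0, ← hpe]
        ring
      rw [if_neg hny, if_pos hTE, hzeq]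
      linarith
    · rw [if_neg hTE]
      by_cases hy0 : 0 < y
      · rw [if_pos hy0]
        nlinarith [mul_nonneg (mul_nonneg (hpnn false y hy) hy0.le) (sub_nonneg.mpr hb.2)]
      · have hyneg : y < 0 := lt_of_le_of_ne (not_lt.mp hy0) (hp.1 y hy)
        have hpc0 : pCond Y p false y = 0 := by
          rcases (pCond_nonneg Y p hp false hy).lt_or_eq with h | h
          · exact absurd ((mem_TE_false Y p y).mpr ⟨hy, hyneg, h⟩) hTE
          · exact h.symm
        have hp0 : p false y = 0 := p_of_pCond_zero Y p hp hpc0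
        simp [hy0, hp0]
  have hC := sum_TE_split Y p (fun yc => z yc * (pG Y p yc.2 * |yc.1|))
  have hSsplit := sum_TE_split Y p (fun yc => z yc)
  simp only at hC hSsplit
  have hUtil : util Y p π ≤ eyPos Y p - C := by
    have h1 : ∑ y ∈ Y, p true y * y * π true y
        ≤ (∑ y ∈ Y, if 0 < y then p true y * y else 0)
          - ∑ y ∈ Y, (if (y, true) ∈ TE Y p then z (y, true) * (pG Y p true * |y|) else 0) := by
      rw [← Finset.sum_sub_distrib]; exact Finset.sum_le_sum t_true
    have h2 : ∑ y ∈ Y, p false y * y * π false y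
        ≤ (∑ y ∈ Y, if 0 < y then p false y * y else 0)
          - ∑ y ∈ Y, (if (y, false) ∈ TE Y p then z (y, false) * (pG Y p false * |y|) else 0) := by
      rw [← Finset.sum_sub_distrib]; exact Finset.sum_le_sum t_false
    have heq : eyPos Y p - C
        = ((∑ y ∈ Y, if 0 < y then p true y * y else 0)
            - ∑ y ∈ Y, (if (y, true) ∈ TE Y p then z (y, true) * (pG Y p true * |y|) else 0))
          + ((∑ y ∈ Y, if 0 < y then p false y * y else 0)
            - ∑ y ∈ Y, (if (y, false) ∈ TE Y p then z (y, false) * (pG Y p false * |y|) else 0)) := by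
      rw [hCdef, eyPos, Fintype.sum_bool, Finset.sum_filter, Finset.sum_filter, hC]
      ring
    rw [util, Fintype.sum_bool, heq]
    exact add_le_add h1 h2
  -- selection rate bounds
  have s_true : ∀ y ∈ Y,
      (if 0 < y then pCond Y p true y else 0) - (if (y, true) ∈ TE Y p then z (y, true) else 0)
        ≤ pCond Y p true y * π true y := by
    intro y hy
    have hb := hπ true y hy
    by_cases hTE : (y, true) ∈ TE Y p
    · obtain ⟨-, hy0, hpc⟩ := (mem_TE_true Y p y).mp hTE
      have hzeq : z (y, true) = pCond Y p true y * (1 - π true y) := by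
        simp only [hzdef, wit, hTE, if_true]
      rw [if_pos hy0, if_pos hTE, hzeq]
      exact le_of_eq (by ring)
    · rw [if_neg hTE]
      by_cases hy0 : 0 < y
      · have hpc0 : pCond Y p true y = 0 := by
          rcases (pCond_nonneg Y p hp true hy).lt_or_eq with h | h
          · exact absurd ((mem_TE_true Y p y).mpr ⟨hy, hy0, h⟩) hTE
          · exact h.symm
        simp [hy0, hpc0]
      · rw [if_neg hy0]
        have := mul_nonneg (pCond_nonneg Y p hp true hy) hb.1
        linarith
  have s_false : ∀ y ∈ Y, pCond Y p false y * π false y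
      ≤ (if 0 < y then pCond Y p false y else 0)
        + (if (y, false) ∈ TE Y p then z (y, false) else 0) := by
    intro y hy
    have hb := hπ false y hy
    by_cases hTE : (y, false) ∈ TE Y p
    · obtain ⟨-, hy0, hpc⟩ := (mem_TE_false Y p y).mp hTE
      have hny : ¬ (0 < y) := by linarith
      have hzeq : z (y, false) = pCond Y p false y * π false y := by
        simp only [hzdef, wit, hTE, if_true]
        norm_num
      rw [if_neg hny, if_pos hTE, hzeq]
      linarith
    · rw [if_neg hTE]
      by_cases hy0 : 0 < y
      · rw [if_pos hy0]
        have := mul_le_of_le_one_right (pCond_nonneg Y p hp false hy) hb.2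
        linarith
      · have hyneg : y < 0 := lt_of_le_of_ne (not_lt.mp hy0) (hp.1 y hy)
        have hpc0 : pCond Y p false y = 0 := by
          rcases (pCond_nonneg Y p hp false hy).lt_or_eq with h | h
          · exact absurd ((mem_TE_false Y p y).mpr ⟨hy, hyneg, h⟩) hTE
          · exact h.symm
        simp [hy0, hpc0]
  have hSelT : posRate Y p true - (∑ y ∈ Y, if (y, true) ∈ TE Y p then z (y, true) else 0)
      ≤ selRate Y p π true := by
    rw [selRate, posRate, Finset.sum_filter, ← Finset.sum_sub_distrib]
    exact Finset.sum_le_sum s_true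
  have hSelF : selRate Y p π false
      ≤ posRate Y p false + ∑ y ∈ Y, (if (y, false) ∈ TE Y p then z (y, false) else 0) := by
    rw [selRate, posRate, Finset.sum_filter, ← Finset.sum_add_distrib]
    exact Finset.sum_le_sum s_false
  have hDispGe : dUM Y p - S ≤ disp Y p π := by
    have h1 : dUM Y p - S ≤ selRate Y p π true - selRate Y p π false := by
      rw [dUM, hSdef, hSsplit]
      linarith
    exact h1.trans (le_abs_self _)
  have hdisp_nn : (0:ℝ) ≤ disp Y p π := abs_nonneg _
  have hgd_nn : 0 ≤ g (disp Y p π) := hg.2.2.2 _ hdisp_nn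
  by_cases hc : S ≤ dUM Y p
  · refine ⟨z, hfeas, hc, ?_⟩
    have hmono : g (dUM Y p - S) ≤ g (disp Y p π) :=
      hg.2.1 (by simp only [Set.mem_Ici]; linarith) hdisp_nn hDispGe
    have := mul_le_mul_of_nonneg_left hmono hlam
    rw [obj]
    linarith
  · push_neg at hc
    have hSpos : 0 < S := lt_trans hUM hc
    set t : ℝ := dUM Y p / S with htdef
    have ht0 : 0 ≤ t := div_nonneg hUM.le hSpos.le
    have ht1 : t ≤ 1 := (div_le_one hSpos).mpr hc.le
    refine ⟨fun yc => t * z yc, ?_, ?_, ?_⟩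
    · intro yc h
      refine ⟨mul_nonneg ht0 (hznn yc h), ?_⟩
      calc t * z yc ≤ 1 * z yc := mul_le_mul_of_nonneg_right ht1 (hznn yc h)
        _ = z yc := one_mul _
        _ ≤ pCond Y p yc.2 yc.1 := (hfeas yc h).2
    · rw [← Finset.mul_sum, ← hSdef, htdef, div_mul_cancel₀ _ hSpos.ne']
    · have hsum1 : (∑ yc ∈ TE Y p, t * z yc) = dUM Y p := by
        rw [← Finset.mul_sum, ← hSdef, htdef, div_mul_cancel₀ _ hSpos.ne']
      have hsum2 : (∑ yc ∈ TE Y p, t * z yc * (pG Y p yc.2 * |yc.1|)) = t * C := by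
        rw [hCdef, Finset.mul_sum]
        exact Finset.sum_congr rfl fun yc h => by ring
      rw [hsum1, hsum2, sub_self, hg.1, mul_zero, sub_zero, obj]
      have htC : t * C ≤ C := by nlinarith
      have hlg : 0 ≤ lam * g (disp Y p π) := mul_nonneg hlam hgd_nn
      linarith

end Stmt7

/-- Reformulation of the penalized problem. Assume `Δ_UM > 0`. The
supremum of `J(π)` over admissible policies equals the supremum, over variables
`z : 𝒯_e → ℝ` with `0 ≤ z_{yc} ≤ p(y|c)` and `∑ z ≤ Δ_UM`, of
`E[Y₊] − ∑ z_{yc}·p(c)·|y| − λ·g(Δ_UM − ∑ z)`. -/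
theorem stmt_7 (Y : Finset ℝ) (p : Bool → ℝ → ℝ) (hp : IsPMF Y p)
    (g : ℝ → ℝ) (hg : AdmissiblePenalty g) (lam : ℝ) (hlam : 0 ≤ lam)
    (hUM : 0 < dUM Y p) :
    sSup {v : ℝ | ∃ π, Admissible Y π ∧ v = obj Y p g lam π} =
      sSup {v : ℝ | ∃ z : ℝ × Bool → ℝ,
        (∀ yc ∈ TE Y p, 0 ≤ z yc ∧ z yc ≤ pCond Y p yc.2 yc.1) ∧
        (∑ yc ∈ TE Y p, z yc) ≤ dUM Y p ∧
        v = eyPos Y p - (∑ yc ∈ TE Y p, z yc * (pG Y p yc.2 * |yc.1|)) -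
              lam * g (dUM Y p - ∑ yc ∈ TE Y p, z yc)} := by
  classical
  set S1 := {v : ℝ | ∃ π, Admissible Y π ∧ v = obj Y p g lam π} with hS1
  set S2 := {v : ℝ | ∃ z : ℝ × Bool → ℝ,
        (∀ yc ∈ TE Y p, 0 ≤ z yc ∧ z yc ≤ pCond Y p yc.2 yc.1) ∧
        (∑ yc ∈ TE Y p, z yc) ≤ dUM Y p ∧
        v = eyPos Y p - (∑ yc ∈ TE Y p, z yc * (pG Y p yc.2 * |yc.1|)) -
              lam * g (dUM Y p - ∑ yc ∈ TE Y p, z yc)} with hS2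
  have hpG := hp.2.2.2
  have hne1 : S1.Nonempty := by
    refine ⟨obj Y p g lam (fun _ _ => 0), fun _ _ => 0, fun c y hy => by norm_num, rfl⟩
  have hne2 : S2.Nonempty := by
    refine ⟨_, (fun _ => 0), ?_, ?_, rfl⟩
    · rintro ⟨y, c⟩ h
      refine ⟨le_refl 0, ?_⟩
      cases c
      · exact ((Stmt7.mem_TE_false Y p y).mp h).2.2.le
      · exact ((Stmt7.mem_TE_true Y p y).mp h).2.2.le
    · simp [hUM.le]
  have hub2 : ∀ v ∈ S2, v ≤ eyPos Y p := by
    rintro v ⟨z, hz1, hz2, rfl⟩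
    have hC0 : 0 ≤ ∑ yc ∈ TE Y p, z yc * (pG Y p yc.2 * |yc.1|) :=
      Finset.sum_nonneg fun yc h =>
        mul_nonneg (hz1 yc h).1 (mul_nonneg (hpG yc.2).le (abs_nonneg _))
    have hg0 : 0 ≤ g (dUM Y p - ∑ yc ∈ TE Y p, z yc) :=
      hg.2.2.2 _ (by simp only [Set.mem_Ici]; linarith)
    have := mul_nonneg hlam hg0
    linarith
  have hbdd2 : BddAbove S2 := ⟨eyPos Y p, hub2⟩
  have hsub : S2 ⊆ S1 := by
    rintro v ⟨z, hz1, hz2, rfl⟩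
    obtain ⟨hadm, heq⟩ := Stmt7.achieve Y p hp g lam z hz1 hz2
    exact ⟨_, hadm, heq.symm⟩
  have hbdd1 : BddAbove S1 := by
    refine ⟨eyPos Y p, ?_⟩
    rintro v ⟨π, hπ, rfl⟩
    obtain ⟨z, h1, h2, h3⟩ := Stmt7.bound Y p hp g hg lam hlam hUM π hπ
    exact h3.trans (hub2 _ ⟨z, h1, h2, rfl⟩)
  apply le_antisymm
  · refine csSup_le hne1 ?_
    rintro v ⟨π, hπ, rfl⟩
    obtain ⟨z, h1, h2, h3⟩ := Stmt7.bound Y p hp g hg lam hlam hUM π hπ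
    exact h3.trans (le_csSup hbdd2 ⟨z, h1, h2, rfl⟩)
  · refine csSup_le hne2 ?_
    intro v hv
    exact le_csSup hbdd1 (hsub hv)
end
end

section
/- (Unpenalized dynamics equalize.) Assume q(y|y',d) > 0 for all y, y' ∈ 𝒴 and d ∈ {0,1}, and λ = 0, so that at each step the (unique) optimal policy selects exactly the individuals with positive qualification. Then the qualification distributions of the two groups converge to each other in total variation: lim_{t→∞} ∑_y |p_t(y|A) − p_t(y|B)| = 0; in particular lim_{t→∞} Δ_t = 0, where Δ_t = |∑_{y>0} p_t(y|A) − ∑_{y>0} p_t(y|B)|. -/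
/-!
Dynamic setting: `Y` is a finite set of nonzero real qualifications; groups `A`/`B`
are encoded as `true`/`false` with weights `wA`/`wB`; `q y y' d` is the probability
of moving to qualification `y` from `y'` under decision `d`; `pA t`/`pB t` are the
group qualification distributions at time `t`, and at every step the institution
uses a myopic maximizer of the penalized objective.
-/

open Finset Filter Topology
open scoped Classical

noncomputable section

/-- `r` is a probability distribution on `Y`. -/
def IsDist (Y : Finset ℝ) (r : ℝ → ℝ) : Prop :=
  (∀ y ∈ Y, 0 ≤ r y) ∧ ∑ y ∈ Y, r y = 1

/-- `q` is a Markov kernel on `Y` (for each decision `d`). -/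
def IsKernel (Y : Finset ℝ) (q : ℝ → ℝ → Bool → ℝ) : Prop :=
  (∀ y ∈ Y, ∀ y' ∈ Y, ∀ d, 0 ≤ q y y' d) ∧
    ∀ y' ∈ Y, ∀ d, (∑ y ∈ Y, q y y' d) = 1

/-- One-step update of a group distribution `r` under selection probabilities `sel`:
`p'(y) = ∑_{y'} r(y')·(sel(y')·q(y|y',1) + (1 − sel(y'))·q(y|y',0))`. -/
def stepDist (Y : Finset ℝ) (q : ℝ → ℝ → Bool → ℝ) (r sel : ℝ → ℝ) (y : ℝ) : ℝ :=
  ∑ y' ∈ Y, r y' * (sel y' * q y y' true + (1 - sel y') * q y y' false)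

/-- Instantaneous utility `∑_{c,y} p(c)·p_t(y|c)·y·π(1|c,y)`. -/
def dUtil (Y : Finset ℝ) (wA wB : ℝ) (pA pB : ℝ → ℝ) (π : Bool → ℝ → ℝ) : ℝ :=
  wA * ∑ y ∈ Y, pA y * y * π true y + wB * ∑ y ∈ Y, pB y * y * π false y

/-- Instantaneous disparity. -/
def dDisp (Y : Finset ℝ) (pA pB : ℝ → ℝ) (π : Bool → ℝ → ℝ) : ℝ :=
  |(∑ y ∈ Y, pA y * π true y) - ∑ y ∈ Y, pB y * π false y|

/-- Instantaneous penalized objective. -/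
def dObj (Y : Finset ℝ) (wA wB : ℝ) (pA pB : ℝ → ℝ) (g : ℝ → ℝ) (lam : ℝ)
    (π : Bool → ℝ → ℝ) : ℝ :=
  dUtil Y wA wB pA pB π - lam * g (dDisp Y pA pB π)

/-- `π` is a myopic optimal policy for the state `(pA, pB)`. -/
def dOptimal (Y : Finset ℝ) (wA wB : ℝ) (pA pB : ℝ → ℝ) (g : ℝ → ℝ) (lam : ℝ)
    (π : Bool → ℝ → ℝ) : Prop :=
  Admissible Y π ∧
    ∀ π', Admissible Y π' → dObj Y wA wB pA pB g lam π' ≤ dObj Y wA wB pA pB g lam π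

/-- A trajectory of the myopic dynamics: at every time `t` the institution uses a
myopic optimal policy `πt t`, and the group distributions evolve accordingly. -/
def Trajectory (Y : Finset ℝ) (q : ℝ → ℝ → Bool → ℝ) (wA wB : ℝ) (g : ℝ → ℝ)
    (lam : ℝ) (pA pB : ℕ → ℝ → ℝ) (πt : ℕ → Bool → ℝ → ℝ) : Prop :=
  ∀ t, dOptimal Y wA wB (pA t) (pB t) g lam (πt t) ∧
    (∀ y ∈ Y, pA (t + 1) y = stepDist Y q (pA t) (πt t true) y) ∧
    (∀ y ∈ Y, pB (t + 1) y = stepDist Y q (pB t) (πt t false) y)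

/-- The utility-maximizing threshold selection rule. -/
def thr : ℝ → ℝ := fun y => if 0 < y then 1 else 0

/-- Unpenalized dynamics equalize. If `q > 0` everywhere and
`λ = 0` (so the unique myopic optimal policy is the threshold rule), the two group
distributions converge to each other in total variation, and `Δ_t → 0`. -/
theorem stmt_10 (Y : Finset ℝ) (hY : ∀ y ∈ Y, y ≠ 0)
    (q : ℝ → ℝ → Bool → ℝ) (hq : IsKernel Y q)
    (hqpos : ∀ y ∈ Y, ∀ y' ∈ Y, ∀ d : Bool, 0 < q y y' d)
    (pA pB : ℕ → ℝ → ℝ)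
    (hA0 : IsDist Y (pA 0)) (hB0 : IsDist Y (pB 0))
    (hAstep : ∀ t, ∀ y ∈ Y, pA (t + 1) y = stepDist Y q (pA t) thr y)
    (hBstep : ∀ t, ∀ y ∈ Y, pB (t + 1) y = stepDist Y q (pB t) thr y) :
    Tendsto (fun t => ∑ y ∈ Y, |pA t y - pB t y|) atTop (𝓝 0) ∧
    Tendsto (fun t =>
        |(∑ y ∈ Y.filter (fun y => 0 < y), pA t y) -
          ∑ y ∈ Y.filter (fun y => 0 < y), pB t y|) atTop (𝓝 0) := by
  classical
  rcases Y.eq_empty_or_nonempty with rfl | hne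
  · constructor <;> simpa using (tendsto_const_nhds : Tendsto (fun _ : ℕ => (0:ℝ)) atTop (𝓝 0))
  set K : ℝ → ℝ → ℝ := fun y y' => thr y' * q y y' true + (1 - thr y') * q y y' false with hK
  have hKq : ∀ y y', K y y' = if 0 < y' then q y y' true else q y y' false := by
    intro y y'
    by_cases h : 0 < y' <;> simp [hK, thr, h]
  have hKpos : ∀ y ∈ Y, ∀ y' ∈ Y, 0 < K y y' := by
    intro y hy y' hy'
    rw [hKq]
    split <;> exact hqpos _ hy _ hy' _
  have hKsum : ∀ y' ∈ Y, ∑ y ∈ Y, K y y' = 1 := by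
    intro y' hy'
    by_cases h : 0 < y'
    · simp only [hKq, if_pos h]; exact hq.2 y' hy' _
    · simp only [hKq, if_neg h]; exact hq.2 y' hy' _
  have hstep_eq : ∀ (r : ℝ → ℝ) (y : ℝ),
      stepDist Y q r thr y = ∑ y' ∈ Y, r y' * K y y' := by
    intro r y; simp [stepDist, hK]
  have hstep_sum : ∀ r : ℝ → ℝ, ∑ y ∈ Y, stepDist Y q r thr y = ∑ y' ∈ Y, r y' := by
    intro r
    simp only [hstep_eq]
    rw [Finset.sum_comm]
    refine Finset.sum_congr rfl fun y' hy' => ?_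
    rw [← Finset.mul_sum, hKsum y' hy', mul_one]
  have hsumA : ∀ t, ∑ y ∈ Y, pA t y = 1 := by
    intro t; induction t with
    | zero => exact hA0.2
    | succ t ih => rw [Finset.sum_congr rfl (fun y hy => hAstep t y hy), hstep_sum, ih]
  have hsumB : ∀ t, ∑ y ∈ Y, pB t y = 1 := by
    intro t; induction t with
    | zero => exact hB0.2
    | succ t ih => rw [Finset.sum_congr rfl (fun y hy => hBstep t y hy), hstep_sum, ih]
  have hD0 : ∀ t, ∑ y ∈ Y, (pA t y - pB t y) = 0 := by
    intro t; rw [Finset.sum_sub_distrib, hsumA, hsumB, sub_self]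
  have hDrec : ∀ t, ∀ y ∈ Y,
      pA (t+1) y - pB (t+1) y = ∑ y' ∈ Y, (pA t y' - pB t y') * K y y' := by
    intro t y hy
    rw [hAstep t y hy, hBstep t y hy, hstep_eq, hstep_eq, ← Finset.sum_sub_distrib]
    exact Finset.sum_congr rfl fun y' _ => by ring
  set m : ℝ → ℝ := fun y => Y.inf' hne (fun y' => K y y') with hm
  set c : ℝ := ∑ y ∈ Y, m y with hc
  obtain ⟨y0, hy0⟩ := hne
  have hmle : ∀ y, ∀ y' ∈ Y, m y ≤ K y y' := fun y y' hy' => Finset.inf'_le _ hy'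
  have hmpos : ∀ y ∈ Y, 0 < m y := by
    intro y hy
    exact (Finset.lt_inf'_iff _).mpr fun y' hy' => hKpos y hy y' hy'
  have hcpos : 0 < c := Finset.sum_pos (fun y hy => hmpos y hy) ⟨y0, hy0⟩
  have hcle1 : c ≤ 1 := by
    calc c ≤ ∑ y ∈ Y, K y y0 := Finset.sum_le_sum fun y hy => hmle y y0 hy0
      _ = 1 := hKsum y0 hy0
  have hcontr : ∀ f : ℝ → ℝ, ∑ y' ∈ Y, f y' = 0 →
      ∑ y ∈ Y, |∑ y' ∈ Y, f y' * K y y'| ≤ (1 - c) * ∑ y' ∈ Y, |f y'| := by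
    intro f hf
    have key : ∀ y ∈ Y, |∑ y' ∈ Y, f y' * K y y'| ≤ ∑ y' ∈ Y, |f y'| * (K y y' - m y) := by
      intro y hy
      have heq : ∑ y' ∈ Y, f y' * K y y' = ∑ y' ∈ Y, f y' * (K y y' - m y) := by
        simp only [mul_sub]
        rw [Finset.sum_sub_distrib, ← Finset.sum_mul, hf, zero_mul, sub_zero]
      rw [heq]
      refine (Finset.abs_sum_le_sum_abs _ _).trans ?_
      refine Finset.sum_le_sum fun y' hy' => ?_
      rw [abs_mul, abs_of_nonneg (sub_nonneg.2 (hmle y y' hy'))]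
    calc ∑ y ∈ Y, |∑ y' ∈ Y, f y' * K y y'|
        ≤ ∑ y ∈ Y, ∑ y' ∈ Y, |f y'| * (K y y' - m y) := Finset.sum_le_sum key
      _ = (1 - c) * ∑ y' ∈ Y, |f y'| := by
          rw [Finset.sum_comm, Finset.mul_sum]
          refine Finset.sum_congr rfl fun y' hy' => ?_
          rw [← Finset.mul_sum, Finset.sum_sub_distrib, hKsum y' hy', hc]
          ring
  have hS : ∀ t, ∑ y ∈ Y, |pA t y - pB t y| ≤ (1 - c)^t * ∑ y ∈ Y, |pA 0 y - pB 0 y| := by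
    intro t; induction t with
    | zero => simp
    | succ t ih =>
      have h1 : ∑ y ∈ Y, |pA (t+1) y - pB (t+1) y| ≤ (1 - c) * ∑ y ∈ Y, |pA t y - pB t y| := by
        calc ∑ y ∈ Y, |pA (t+1) y - pB (t+1) y|
            = ∑ y ∈ Y, |∑ y' ∈ Y, (pA t y' - pB t y') * K y y'| :=
              Finset.sum_congr rfl fun y hy => by rw [hDrec t y hy]
          _ ≤ _ := hcontr _ (hD0 t)
      calc ∑ y ∈ Y, |pA (t+1) y - pB (t+1) y|
          ≤ (1 - c) * ∑ y ∈ Y, |pA t y - pB t y| := h1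
        _ ≤ (1 - c) * ((1 - c)^t * ∑ y ∈ Y, |pA 0 y - pB 0 y|) :=
            mul_le_mul_of_nonneg_left ih (by linarith)
        _ = (1 - c)^(t+1) * ∑ y ∈ Y, |pA 0 y - pB 0 y| := by ring
  have htv : Tendsto (fun t => ∑ y ∈ Y, |pA t y - pB t y|) atTop (𝓝 0) := by
    have hgeo : Tendsto (fun t : ℕ => (1 - c)^t * ∑ y ∈ Y, |pA 0 y - pB 0 y|) atTop (𝓝 0) := by
      have h := tendsto_pow_atTop_nhds_zero_of_lt_one (by linarith : (0:ℝ) ≤ 1 - c)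
        (by linarith : 1 - c < 1)
      simpa using h.mul_const (∑ y ∈ Y, |pA 0 y - pB 0 y|)
    exact squeeze_zero (fun t => Finset.sum_nonneg fun y _ => abs_nonneg _) hS hgeo
  refine ⟨htv, ?_⟩
  refine squeeze_zero (fun t => abs_nonneg _) (fun t => ?_) htv
  calc |(∑ y ∈ Y.filter (fun y => 0 < y), pA t y) - ∑ y ∈ Y.filter (fun y => 0 < y), pB t y|
      = |∑ y ∈ Y.filter (fun y => 0 < y), (pA t y - pB t y)| := by
        rw [Finset.sum_sub_distrib]
    _ ≤ ∑ y ∈ Y.filter (fun y => 0 < y), |pA t y - pB t y| := Finset.abs_sum_le_sum_abs _ _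
    _ ≤ ∑ y ∈ Y, |pA t y - pB t y| :=
        Finset.sum_le_sum_of_subset_of_nonneg (Finset.filter_subset _ _)
          (fun y _ _ => abs_nonneg _)
end
end
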